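/- arXiv:1306.2612 — 2 statements merged into one kernel-verified Lean document; each statement's English description precedes it below -/
import Mathlib

section
/- Every primitive Hausdorff pseudocompact topological inverse semigroup S is a Tychonoff topological space. Moreover, the topological space of S is normal if and only if every maximal subgroup of S is a normal subspace of S. -/
open Topology

set_option linter.unusedSectionVars false
set_option linter.unusedVariables false
set_option maxHeartbeats 1000000
open Topology Filter Set Uniformity
open scoped Classical


/-- A (Hausdorff) topological space is *pseudocompact* if every locally finite
family of non-empty open subsets is finite. -/
def IsPseudocompact (X : Type*) [TopologicalSpace X] : Prop :=
  ∀ 𝒰 : Set (Set X), (∀ U ∈ 𝒰, IsOpen U ∧ U.Nonempty) →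
    LocallyFinite (fun U : 𝒰 => (U : Set X)) → 𝒰.Finite

/-- `inv` witnesses that the semigroup `S` is an *inverse semigroup*:
for every `x`, `inv x` is the unique `y` with `x*y*x = x` and `y*x*y = y`. -/
structure IsInverseSemigroup (S : Type*) [Mul S] (inv : S → S) : Prop where
  mul_inv_mul : ∀ x : S, x * inv x * x = x
  inv_mul_inv : ∀ x : S, inv x * x * inv x = inv x
  inv_unique : ∀ x y : S, x * y * x = x → y * x * y = y → y = inv x

/-- A semigroup with zero is *primitive* when every non-zero idempotent is
minimal among non-zero idempotents for the natural partial order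
`f ≤ e ↔ f*e = e*f = f`. -/
def IsPrimitiveInverse (S : Type*) [Mul S] [Zero S] : Prop :=
  ∀ e f : S, IsIdempotentElem e → e ≠ 0 → IsIdempotentElem f → f ≠ 0 →
    f * e = f → e * f = f → f = e

/-- A subset `H` of a semigroup is a *subgroup* if it is closed under
multiplication and is a group under the induced operation. -/
def IsSubgroupSet (S : Type*) [Mul S] (H : Set S) : Prop :=
  H.Nonempty ∧ (∀ a ∈ H, ∀ b ∈ H, a * b ∈ H) ∧
    ∃ e ∈ H, (∀ a ∈ H, e * a = a ∧ a * e = a) ∧ ∀ a ∈ H, ∃ b ∈ H, a * b = e ∧ b * a = e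

/-- A *maximal subgroup* of a semigroup: a subgroup not properly contained in
any other subgroup. -/
def IsMaximalSubgroup (S : Type*) [Mul S] (H : Set S) : Prop :=
  IsSubgroupSet S H ∧ ∀ K : Set S, IsSubgroupSet S K → H ⊆ K → K = H


theorem exists_unif_dist_fun {X : Type*} [u' : UniformSpace X] [IsCountablyGenerated (𝓤 X)]
    (x : X) {F : Set (X × X)} (hF : F ∈ 𝓤 X) :
    ∃ f : X → ℝ, Continuous f ∧ f x = 0 ∧ (∀ y, f y ∈ Set.Icc (0:ℝ) 1) ∧
      ∀ y, (x, y) ∉ F → f y = 1 := by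
  letI pm := UniformSpace.pseudoMetricSpace X
  obtain ⟨ε, hε, hsub⟩ := Metric.mem_uniformity_dist.1 hF
  refine ⟨fun y => min 1 (dist x y / ε), ?_, ?_, ?_, ?_⟩
  · exact continuous_const.min ((continuous_const.dist continuous_id).div_const ε)
  · simp
  · intro y
    constructor
    · exact le_min zero_le_one (div_nonneg dist_nonneg hε.le)
    · exact min_le_left _ _
  · intro y hy
    have hd : ε ≤ dist x y := by
      by_contra h
      push_neg at h
      exact hy (hsub h)
    have : (1:ℝ) ≤ dist x y / ε := (one_le_div hε).2 hd
    simp [min_eq_left this]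

theorem myTopologicalGroup.completelyRegularSpace (G : Type*) [Group G] [TopologicalSpace G]
    [IsTopologicalGroup G] : CompletelyRegularSpace G := by
  constructor
  intro x K hK hx
  have hKc : Kᶜ ∈ 𝓝 x := hK.isOpen_compl.mem_nhds hx
  have hcont : Continuous fun g : G => x * g := continuous_const.mul continuous_id
  have hW0 : (fun g => x * g) ⁻¹' Kᶜ ∈ 𝓝 (1 : G) :=
    hcont.continuousAt (x := (1 : G)) (by simpa using hKc)
  have key : ∀ s : Set G, s ∈ 𝓝 (1 : G) → ∃ t : Set G, t ∈ 𝓝 (1 : G) ∧ t ⊆ s ∧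
      (∀ g ∈ t, g⁻¹ ∈ t) ∧ ∀ v ∈ t, ∀ w ∈ t, v * w ∈ s := by
    intro s hs
    obtain ⟨V, hV, hVmul⟩ := exists_nhds_one_split hs
    refine ⟨V ∩ s ∩ (V ∩ s)⁻¹, ?_, ?_, ?_, ?_⟩
    · exact Filter.inter_mem (Filter.inter_mem hV hs)
        (inv_mem_nhds_one G (Filter.inter_mem hV hs))
    · exact fun g hg => hg.1.2
    · rintro g ⟨hg1, hg2⟩
      exact ⟨by simpa using hg2, by simpa using hg1⟩
    · intro v hv w hw
      exact hVmul v hv.1.1 w hw.1.1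
  choose! T hT1 hT2 hT3 hT4 using key
  set V : ℕ → Set G := fun n => (fun s => T s)^[n+1] ((fun g => x * g) ⁻¹' Kᶜ) with hV
  have hVsucc : ∀ n, V (n+1) = T (V n) := fun n => Function.iterate_succ_apply' _ _ _
  have hVmem : ∀ n, V n ∈ 𝓝 (1 : G) := by
    intro n
    induction n with
    | zero => exact hT1 _ hW0
    | succ k ih => rw [hVsucc]; exact hT1 _ ih
  have hV0 : V 0 ⊆ (fun g => x * g) ⁻¹' Kᶜ := hT2 _ hW0
  have hVsymm : ∀ n, ∀ g ∈ V n, g⁻¹ ∈ V n := by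
    intro n
    cases n with
    | zero => exact hT3 _ hW0
    | succ k => rw [hVsucc]; exact hT3 _ (hVmem k)
  have hVmul : ∀ n, ∀ v ∈ V (n+1), ∀ w ∈ V (n+1), v * w ∈ V n := by
    intro n; rw [hVsucc]; exact hT4 _ (hVmem n)
  have hVanti : ∀ n, V (n+1) ⊆ V n := by
    intro n g hg
    have h1 : (1 : G) ∈ V (n+1) := mem_of_mem_nhds (hVmem (n+1))
    simpa using hVmul n g hg 1 h1
  set E : ℕ → Set (G × G) := fun n => {p : G × G | p.1⁻¹ * p.2 ∈ V n} with hE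
  have hEanti : Antitone E := antitone_nat_of_succ_le fun n p hp => hVanti n hp
  set u : UniformSpace G := UniformSpace.ofCore
    { uniformity := ⨅ n, 𝓟 (E n)
      refl := le_iInf fun n => principal_mono.2 <| SetRel.id_subset_iff.2 ⟨fun a => by
        show (a, a) ∈ E n
        simp only [hE, mem_setOf_eq, inv_mul_cancel]
        exact mem_of_mem_nhds (hVmem n)⟩
      symm := by
        refine tendsto_iInf.2 fun n => ?_
        refine Tendsto.mono_left ?_ (iInf_le _ n)
        refine tendsto_principal_principal.2 ?_
        rintro ⟨a, b⟩ hab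
        have := hVsymm n _ hab
        simpa [hE, mul_inv_rev] using this
      comp := by
        refine le_iInf fun n => le_principal_iff.2 ?_
        have hmem : E (n+1) ∈ ⨅ m, 𝓟 (E m) :=
          mem_iInf_of_mem (n+1) (mem_principal_self _)
        refine mem_of_superset (mem_lift' hmem) ?_
        rintro ⟨a, b⟩ ⟨c, hac, hcb⟩
        have : (a⁻¹ * c) * (c⁻¹ * b) ∈ V n := hVmul n _ hac _ hcb
        simpa [hE, mul_assoc] using this } with hu
  have hucg : @Filter.IsCountablyGenerated _ (@uniformity G u) :=
    Filter.isCountablyGenerated_seq E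
  -- the ball around y for E n is an original-neighborhood of y
  have hball : ∀ (y : G) (n : ℕ), {z | (y, z) ∈ E n} ∈ 𝓝 y := by
    intro y n
    have hc : Continuous fun z : G => y⁻¹ * z := continuous_const.mul continuous_id
    exact hc.continuousAt (x := y) (show V n ∈ 𝓝 (y⁻¹ * y) by rw [inv_mul_cancel]; exact hVmem n)
  have hbasis : (⨅ n, 𝓟 (E n)).HasBasis (fun _ : ℕ => True) E :=
    hasBasis_iInf_principal (hEanti.directed_ge) 
  have hE0 : E 0 ∈ @uniformity G u := mem_iInf_of_mem 0 (mem_principal_self _)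
  obtain ⟨f, hfc, hfx, hfI, hfK⟩ := @exists_unif_dist_fun G u
    (Filter.isCountablyGenerated_seq E) x (E 0) hE0
  -- f is continuous for the original topology
  have hle : ‹TopologicalSpace G› ≤ u.toTopologicalSpace := by
    refine le_of_nhds_le_nhds fun y => ?_
    intro s hs
    rw [@UniformSpace.mem_nhds_iff G u] at hs
    obtain ⟨W, hW, hWs⟩ := hs
    obtain ⟨n, -, hn⟩ := hbasis.mem_iff.1 hW
    refine Filter.mem_of_superset (hball y n) ?_
    exact fun z hz => hWs (hn hz)
  have hfc' : Continuous f := by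
    have hid : @Continuous G G _ u.toTopologicalSpace id := continuous_id_iff_le.2 hle
    have := @Continuous.comp G G ℝ ‹TopologicalSpace G› u.toTopologicalSpace _ id f hfc hid
    simpa using this
  -- pack into unit interval
  refine ⟨fun y => ⟨f y, hfI y⟩, ?_, ?_, ?_⟩
  · exact hfc'.subtype_mk _
  · exact Subtype.ext hfx
  · intro y hy
    refine Subtype.ext ?_
    show f y = 1
    refine hfK y ?_
    intro hmem
    have hm : x⁻¹ * y ∈ V 0 := hmem
    have h2 : x * (x⁻¹ * y) ∈ Kᶜ := hV0 hm
    rw [mul_inv_cancel_left] at h2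
    exact h2 hy



open Topology Filter Set

namespace ISG

variable {S : Type*} [Semigroup S] {inv : S → S}

theorem inv_inv (h : IsInverseSemigroup S inv) (x : S) : inv (inv x) = x :=
  (h.inv_unique (inv x) x (h.inv_mul_inv x) (h.mul_inv_mul x)).symm

theorem idem_mul_inv (h : IsInverseSemigroup S inv) (x : S) : (x * inv x) * (x * inv x) = x * inv x := by
  have := congrArg (· * inv x) (h.mul_inv_mul x)
  simpa [mul_assoc] using this

theorem idem_inv_mul (h : IsInverseSemigroup S inv) (x : S) : (inv x * x) * (inv x * x) = inv x * x := by
  have := congrArg (· * x) (h.inv_mul_inv x)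
  have := congrArg (inv x * ·) (h.mul_inv_mul x)
  simpa [mul_assoc] using congrArg (inv x * ·) (h.mul_inv_mul x)

theorem inv_idem (h : IsInverseSemigroup S inv) {e : S} (he : e * e = e) : inv e = e :=
  (h.inv_unique e e (by rw [he, he]) (by rw [he, he])).symm

theorem idem_comm (h : IsInverseSemigroup S inv) {e f : S} (he : e * e = e) (hf : f * f = f) :
    e * f = f * e := by
  -- auxiliary: the inverse of a product of two idempotents is idempotent, hence e*f idempotent
  have key : ∀ a b : S, a * a = a → b * b = b → (a * b) * (a * b) = a * b := by
    intro a b ha hb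
    obtain ⟨c, hc⟩ : ∃ c, c = inv (a * b) := ⟨_, rfl⟩
    have hmim : a * b * c * (a * b) = a * b := by rw [hc]; exact h.mul_inv_mul (a * b)
    have himi : c * (a * b) * c = c := by rw [hc]; exact h.inv_mul_inv (a * b)
    have step1 : b * c * a = c := by
      have s1 : b * c * a = inv (a * b) := ?_
      · rw [← hc] at s1; exact s1
      refine h.inv_unique (a * b) (b * c * a) ?_ ?_
      · calc a * b * (b * c * a) * (a * b)
            = a * ((b * b) * (c * ((a * a) * b))) := by simp only [mul_assoc]
          _ = a * (b * (c * (a * b))) := by rw [ha, hb]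
          _ = a * b * c * (a * b) := by simp only [mul_assoc]
          _ = a * b := hmim
      · calc b * c * a * (a * b) * (b * c * a)
            = b * ((c * ((a * a) * (b * b))) * (c * a)) := by simp only [mul_assoc]
          _ = b * (c * (a * b) * (c * a)) := by rw [ha, hb]
          _ = b * ((c * (a * b) * c) * a) := by simp only [mul_assoc]
          _ = b * (c * a) := by rw [himi]
          _ = b * c * a := by simp only [mul_assoc]
    have hcalc : (b * c * a) * (b * c * a) = c := by
      calc (b * c * a) * (b * c * a)
          = b * ((c * (a * b) * c) * a) := by simp only [mul_assoc]
        _ = b * (c * a) := by rw [himi]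
        _ = b * c * a := by simp only [mul_assoc]
        _ = c := step1
    have step2 : c * c = c := by
      calc c * c = (b * c * a) * (b * c * a) := by rw [step1]
        _ = c := hcalc
    have h3 : inv c = a * b := by rw [hc, inv_inv h]
    have h4 : inv c = c := inv_idem h step2
    rw [← h3, h4]
    exact step2
  have hef : (e * f) * (e * f) = e * f := key e f he hf
  have hfe : (f * e) * (f * e) = f * e := key f e hf he
  -- f*e is an inverse of e*f
  have : f * e = inv (e * f) := by
    refine h.inv_unique (e * f) (f * e) ?_ ?_
    · calc e * f * (f * e) * (e * f) = e * (f * f) * (e * e) * f := by simp only [mul_assoc]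
        _ = (e * f) * (e * f) := by rw [hf, he]; simp only [mul_assoc]
        _ = e * f := hef
    · calc f * e * (e * f) * (f * e) = f * (e * e) * (f * f) * e := by simp only [mul_assoc]
        _ = (f * e) * (f * e) := by rw [he, hf]; simp only [mul_assoc]
        _ = f * e := hfe
  rw [this, inv_idem h hef]

theorem inv_mul_rev (h : IsInverseSemigroup S inv) (x y : S) :
    inv (x * y) = inv y * inv x := by
  symm
  refine h.inv_unique (x * y) (inv y * inv x) ?_ ?_
  · have hcomm : (y * inv y) * (inv x * x) = (inv x * x) * (y * inv y) :=
      idem_comm h (idem_mul_inv h y) (idem_inv_mul h x)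
    calc x * y * (inv y * inv x) * (x * y)
        = x * ((y * inv y) * (inv x * x)) * y := by simp only [mul_assoc]
      _ = x * ((inv x * x) * (y * inv y)) * y := by rw [hcomm]
      _ = (x * inv x * x) * (y * inv y * y) := by simp only [mul_assoc]
      _ = x * y := by rw [h.mul_inv_mul, h.mul_inv_mul]
  · have hcomm : (inv x * x) * (y * inv y) = (y * inv y) * (inv x * x) :=
      (idem_comm h (idem_mul_inv h y) (idem_inv_mul h x)).symm
    calc inv y * inv x * (x * y) * (inv y * inv x)
        = inv y * ((inv x * x) * (y * inv y)) * inv x := by simp only [mul_assoc]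
      _ = inv y * ((y * inv y) * (inv x * x)) * inv x := by rw [hcomm]
      _ = (inv y * y * inv y) * (inv x * x * inv x) := by simp only [mul_assoc]
      _ = inv y * inv x := by rw [h.inv_mul_inv, h.inv_mul_inv]

end ISG

namespace ISG0

open ISG

variable {S : Type*} [SemigroupWithZero S] {inv : S → S}

theorem inv_zero (h : IsInverseSemigroup S inv) : inv (0 : S) = 0 :=
  (h.inv_unique 0 0 (by simp) (by simp)).symm

theorem mul_inv_ne_zero (h : IsInverseSemigroup S inv) {x : S} (hx : x ≠ 0) :
    x * inv x ≠ 0 := by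
  intro h0
  apply hx
  calc x = x * inv x * x := (h.mul_inv_mul x).symm
    _ = 0 := by rw [h0, zero_mul]

theorem inv_mul_ne_zero (h : IsInverseSemigroup S inv) {x : S} (hx : x ≠ 0) :
    inv x * x ≠ 0 := by
  intro h0
  apply hx
  calc x = x * (inv x * x) := by rw [← mul_assoc]; exact (h.mul_inv_mul x).symm
    _ = 0 := by rw [h0, mul_zero]

theorem inv_ne_zero (h : IsInverseSemigroup S inv) {x : S} (hx : x ≠ 0) : inv x ≠ 0 := by
  intro h0
  exact mul_inv_ne_zero h hx (by rw [h0, mul_zero])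

/-- In a primitive inverse semigroup, distinct non-zero idempotents are orthogonal. -/
theorem idem_orth (h : IsInverseSemigroup S inv) (hprim : IsPrimitiveInverse S)
    {e f : S} (he : e * e = e) (hf : f * f = f) (hee : e ≠ 0) (hff : f ≠ 0)
    (hne : e ≠ f) : e * f = 0 := by
  by_contra h0
  have hcomm := idem_comm h he hf
  have hidem : (e * f) * (e * f) = e * f := by
    calc (e * f) * (e * f) = e * (f * e) * f := by simp only [mul_assoc]
      _ = e * (e * f) * f := by rw [← hcomm]
      _ = (e * e) * (f * f) := by simp only [mul_assoc]
      _ = e * f := by rw [he, hf]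
  have h1 : e * f = e := by
    refine hprim e (e * f) he hee hidem h0 ?_ ?_
    · calc (e * f) * e = e * (f * e) := by rw [mul_assoc]
        _ = e * (e * f) := by rw [← hcomm]
        _ = (e * e) * f := by rw [mul_assoc]
        _ = e * f := by rw [he]
    · calc e * (e * f) = (e * e) * f := by rw [mul_assoc]
        _ = e * f := by rw [he]
  have h2 : e * f = f := by
    refine hprim f (e * f) hf hff hidem h0 ?_ ?_
    · calc (e * f) * f = e * (f * f) := by rw [mul_assoc]
        _ = e * f := by rw [hf]
    · calc f * (e * f) = (f * e) * f := by rw [mul_assoc]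
        _ = (e * f) * f := by rw [hcomm]
        _ = e * (f * f) := by rw [mul_assoc]
        _ = e * f := by rw [hf]
  exact hne (h1.symm.trans h2)

end ISG0

/-- The `H`-class of `x`. -/
def Hcl {S : Type*} [Mul S] (inv : S → S) (x : S) : Set S :=
  {s | s * inv s = x * inv x ∧ inv s * s = inv x * x}

namespace HclFacts

open ISG ISG0

variable {S : Type*} [Semigroup S] {inv : S → S}

theorem self_mem (x : S) : x ∈ Hcl inv x := ⟨rfl, rfl⟩

theorem Hcl_eq_of_mem {x s : S} (hs : s ∈ Hcl inv x) : Hcl inv s = Hcl inv x := by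
  ext z
  constructor
  · rintro ⟨h1, h2⟩
    exact ⟨h1.trans hs.1, h2.trans hs.2⟩
  · rintro ⟨h1, h2⟩
    exact ⟨h1.trans hs.1.symm, h2.trans hs.2.symm⟩

theorem Hcl_eq_of_inter {x y : S} (hne : (Hcl inv x ∩ Hcl inv y).Nonempty) :
    Hcl inv x = Hcl inv y := by
  obtain ⟨z, hzx, hzy⟩ := hne
  rw [← Hcl_eq_of_mem hzx, Hcl_eq_of_mem hzy]

-- rewriting toolkit for members of `Hcl inv x`

theorem r1 {x u : S} (hu : u ∈ Hcl inv x) (z : S) :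
    u * (inv u * z) = x * (inv x * z) := by
  rw [← mul_assoc, ← mul_assoc, hu.1]

theorem r2 {x u : S} (hu : u ∈ Hcl inv x) (z : S) :
    inv u * (u * z) = inv x * (x * z) := by
  rw [← mul_assoc, ← mul_assoc, hu.2]

theorem X1 (h : IsInverseSemigroup S inv) (x z : S) : x * (inv x * (x * z)) = x * z := by
  rw [← mul_assoc, ← mul_assoc, h.mul_inv_mul]

theorem X2 (h : IsInverseSemigroup S inv) (x z : S) :
    inv x * (x * (inv x * z)) = inv x * z := by
  rw [← mul_assoc, ← mul_assoc, h.inv_mul_inv]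

theorem r1e {x u : S} (hu : u ∈ Hcl inv x) : u * inv u = x * inv x := hu.1

theorem r2e {x u : S} (hu : u ∈ Hcl inv x) : inv u * u = inv x * x := hu.2

theorem r3e (h : IsInverseSemigroup S inv) {x u : S} (hu : u ∈ Hcl inv x) :
    inv u * (x * inv x) = inv u := by
  rw [← hu.1, ← mul_assoc, h.inv_mul_inv]

theorem r4e (h : IsInverseSemigroup S inv) {x u : S} (hu : u ∈ Hcl inv x) :
    u * (inv x * x) = u := by
  rw [← hu.2, ← mul_assoc, h.mul_inv_mul]

theorem r3 (h : IsInverseSemigroup S inv) {x u : S} (hu : u ∈ Hcl inv x) (z : S) :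
    inv u * (x * (inv x * z)) = inv u * z := by
  calc inv u * (x * (inv x * z)) = inv u * (x * inv x) * z := by simp only [mul_assoc]
    _ = inv u * z := by rw [r3e h hu]

theorem r4 (h : IsInverseSemigroup S inv) {x u : S} (hu : u ∈ Hcl inv x) (z : S) :
    u * (inv x * (x * z)) = u * z := by
  calc u * (inv x * (x * z)) = u * (inv x * x) * z := by simp only [mul_assoc]
    _ = u * z := by rw [r4e h hu]

/-- `x * inv x` acts as a left identity on the class. -/
theorem l1 (h : IsInverseSemigroup S inv) {x u : S} (hu : u ∈ Hcl inv x) :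
    x * (inv x * u) = u := by
  calc x * (inv x * u) = x * inv x * u := (mul_assoc _ _ _).symm
    _ = u * inv u * u := by rw [hu.1]
    _ = u := h.mul_inv_mul u

theorem l2 (h : IsInverseSemigroup S inv) {x u : S} (hu : u ∈ Hcl inv x) :
    inv x * (x * inv u) = inv u := by
  calc inv x * (x * inv u) = inv x * x * inv u := (mul_assoc _ _ _).symm
    _ = inv u * u * inv u := by rw [hu.2]
    _ = inv u := h.inv_mul_inv u

/-- `inv x * x` acts as a right identity on the class. -/
theorem l3 (h : IsInverseSemigroup S inv) {x u : S} (hu : u ∈ Hcl inv x) :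
    u * (inv x * x) = u := r4e h hu

/-- `s * inv y * y = s` for members of the same class. -/
theorem mul_inv_mul_self (h : IsInverseSemigroup S inv) {x s y : S}
    (hs : s ∈ Hcl inv x) (hy : y ∈ Hcl inv x) : s * inv y * y = s := by
  calc s * inv y * y = s * (inv y * y) := mul_assoc _ _ _
    _ = s * (inv x * x) := by rw [r2e hy]
    _ = s := r4e h hs

/-- The key shifting identity used for the pseudocompactness argument. -/
theorem shift_mem (h : IsInverseSemigroup S inv) {x s y q : S}
    (hs : s ∈ Hcl inv x) (hy : y ∈ Hcl inv x) (hq : q ∈ Hcl inv x) :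
    s * inv y * q ∈ Hcl inv x := by
  constructor
  · -- (s y⁻¹ q)(s y⁻¹ q)⁻¹ = x x⁻¹
    rw [ISG.inv_mul_rev h, ISG.inv_mul_rev h, ISG.inv_inv h]
    -- goal : s * inv y * q * (inv q * (y * inv s)) = x * inv x
    calc s * inv y * q * (inv q * (y * inv s))
        = s * (inv y * (q * (inv q * (y * inv s)))) := by simp only [mul_assoc]
      _ = s * (inv y * (x * (inv x * (y * inv s)))) := by rw [r1 hq]
      _ = s * (inv y * (y * inv s)) := by rw [r3 h hy]
      _ = s * (inv x * (x * inv s)) := by rw [r2 hy]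
      _ = s * inv s := by rw [l2 h hs]
      _ = x * inv x := hs.1
  · rw [ISG.inv_mul_rev h, ISG.inv_mul_rev h, ISG.inv_inv h]
    -- goal : inv q * (y * inv s) * (s * inv y * q) = inv x * x
    calc inv q * (y * inv s) * (s * (inv y) * q)
        = inv q * (y * (inv s * (s * (inv y * q)))) := by simp only [mul_assoc]
      _ = inv q * (y * (inv x * (x * (inv y * q)))) := by rw [r2 hs]
      _ = inv q * (y * (inv y * q)) := by rw [r4 h hy]
      _ = inv q * (x * (inv x * q)) := by rw [r1 hy]
      _ = inv q * q := by rw [l1 h hq]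
      _ = inv x * x := hq.2

theorem shift_recover (h : IsInverseSemigroup S inv) {x s y q : S}
    (hs : s ∈ Hcl inv x) (hy : y ∈ Hcl inv x) (hq : q ∈ Hcl inv x) :
    q * inv (s * inv y * q) * s = y := by
  rw [ISG.inv_mul_rev h, ISG.inv_mul_rev h, ISG.inv_inv h]
  -- goal : q * (inv q * (y * inv s)) * s = y
  calc q * (inv q * (y * inv s)) * s
      = q * (inv q * (y * (inv s * s))) := by simp only [mul_assoc]
    _ = x * (inv x * (y * (inv s * s))) := by rw [r1 hq]
    _ = x * (inv x * (y * (inv x * x))) := by rw [r2e hs]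
    _ = x * (inv x * y) := by rw [r4e h hy]
    _ = y := l1 h hy
end HclFacts

namespace HclZ

open ISG ISG0 HclFacts

variable {S : Type*} [SemigroupWithZero S] {inv : S → S}

theorem mem_ne_zero (h : IsInverseSemigroup S inv) {x s : S} (hx : x ≠ 0)
    (hs : s ∈ Hcl inv x) : s ≠ 0 := by
  intro h0
  subst h0
  have := hs.1
  rw [zero_mul] at this
  exact mul_inv_ne_zero h hx this.symm

theorem zero_not_mem (h : IsInverseSemigroup S inv) {x : S} (hx : x ≠ 0) :
    (0 : S) ∉ Hcl inv x := fun h0 => mem_ne_zero h hx h0 rfl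

theorem mem_Hcl_idem (h : IsInverseSemigroup S inv) {e : S} (he : e * e = e) (s : S) :
    s ∈ Hcl inv e ↔ s * inv s = e ∧ inv s * s = e := by
  unfold Hcl
  rw [Set.mem_setOf_eq, inv_idem h he, he]

theorem mul_mem_G (h : IsInverseSemigroup S inv) {e a b : S} (he : e * e = e)
    (ha : a * inv a = e ∧ inv a * a = e) (hb : b * inv b = e ∧ inv b * b = e) :
    (a * b) * inv (a * b) = e ∧ inv (a * b) * (a * b) = e := by
  constructor
  · rw [inv_mul_rev h]
    calc a * b * (inv b * inv a) = a * ((b * inv b) * inv a) := by simp only [mul_assoc]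
      _ = a * ((inv a * a) * inv a) := by rw [hb.1, ← ha.2]
      _ = (a * inv a) * (a * inv a) := by simp only [mul_assoc]
      _ = e := by rw [ha.1, he]
  · rw [inv_mul_rev h]
    calc inv b * inv a * (a * b) = inv b * ((inv a * a) * b) := by simp only [mul_assoc]
      _ = inv b * ((b * inv b) * b) := by rw [ha.2, ← hb.1]
      _ = (inv b * b) * (inv b * b) := by simp only [mul_assoc]
      _ = e := by rw [hb.2, he]

theorem trans_mem₁ (h : IsInverseSemigroup S inv) {x z : S} (hz : z ∈ Hcl inv x) :
    inv x * z ∈ Hcl inv (inv x * x) := by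
  rw [mem_Hcl_idem h (idem_inv_mul h x)]
  constructor
  · rw [inv_mul_rev h, inv_inv h]
    calc inv x * z * (inv z * x) = inv x * ((z * inv z) * x) := by simp only [mul_assoc]
      _ = inv x * ((x * inv x) * x) := by rw [hz.1]
      _ = (inv x * x) * (inv x * x) := by simp only [mul_assoc]
      _ = inv x * x := idem_inv_mul h x
  · rw [inv_mul_rev h, inv_inv h]
    calc inv z * x * (inv x * z) = inv z * ((x * inv x) * z) := by simp only [mul_assoc]
      _ = inv z * ((z * inv z) * z) := by rw [hz.1]
      _ = (inv z * z) * (inv z * z) := by simp only [mul_assoc]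
      _ = (inv x * x) * (inv x * x) := by rw [hz.2]
      _ = inv x * x := idem_inv_mul h x

theorem trans_mem₂ (h : IsInverseSemigroup S inv) {x w : S}
    (hw : w ∈ Hcl inv (inv x * x)) : x * w ∈ Hcl inv x := by
  rw [mem_Hcl_idem h (idem_inv_mul h x)] at hw
  constructor
  · rw [inv_mul_rev h]
    calc x * w * (inv w * inv x) = x * ((w * inv w) * inv x) := by simp only [mul_assoc]
      _ = x * ((inv x * x) * inv x) := by rw [hw.1]
      _ = (x * inv x) * (x * inv x) := by simp only [mul_assoc]
      _ = x * inv x := idem_mul_inv h x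
  · rw [inv_mul_rev h]
    calc inv w * inv x * (x * w) = inv w * ((inv x * x) * w) := by simp only [mul_assoc]
      _ = inv w * ((w * inv w) * w) := by rw [hw.1]
      _ = (inv w * w) * (inv w * w) := by simp only [mul_assoc]
      _ = (inv x * x) * (inv x * x) := by rw [hw.2]
      _ = inv x * x := idem_inv_mul h x

theorem trans_inv₂ (h : IsInverseSemigroup S inv) {x w : S}
    (hw : w ∈ Hcl inv (inv x * x)) : inv x * (x * w) = w := by
  rw [mem_Hcl_idem h (idem_inv_mul h x)] at hw
  calc inv x * (x * w) = (inv x * x) * w := by rw [mul_assoc]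
    _ = (w * inv w) * w := by rw [hw.1]
    _ = w := h.mul_inv_mul w

end HclZ


namespace Htop

open ISG ISG0 HclFacts HclZ

variable {S : Type*} [SemigroupWithZero S] [TopologicalSpace S] [T2Space S] {inv : S → S}

theorem isClosed_Hcl (hm : Continuous fun p : S × S => p.1 * p.2)
    (hinvc : Continuous inv) (x : S) : IsClosed (Hcl inv x) := by
  haveI : ContinuousMul S := ⟨hm⟩
  exact IsClosed.inter
    (isClosed_eq (continuous_id.mul hinvc) continuous_const)
    (isClosed_eq (hinvc.mul continuous_id) continuous_const)

theorem exists_sq_nbhd (hm : Continuous fun p : S × S => p.1 * p.2)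
    {U : Set S} (hU : IsOpen U) {a b : S} (hab : a * b ∈ U) :
    ∃ V W : Set S, IsOpen V ∧ IsOpen W ∧ a ∈ V ∧ b ∈ W ∧ ∀ v ∈ V, ∀ w ∈ W, v * w ∈ U := by
  have hopen : IsOpen ((fun p : S × S => p.1 * p.2) ⁻¹' U) := hU.preimage hm
  obtain ⟨V, W, hV, hW, haV, hbW, hsub⟩ := isOpen_prod_iff.1 hopen a b hab
  exact ⟨V, W, hV, hW, haV, hbW, fun v hv w hw => hsub (Set.mk_mem_prod hv hw)⟩

theorem isOpen_Hcl (h : IsInverseSemigroup S inv)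
    (hm : Continuous fun p : S × S => p.1 * p.2) (hinvc : Continuous inv)
    (hprim : IsPrimitiveInverse S) {x : S} (hx : x ≠ 0) : IsOpen (Hcl inv x) := by
  haveI : ContinuousMul S := ⟨hm⟩
  have hee : (x * inv x) * (x * inv x) = x * inv x := idem_mul_inv h x
  have hff : (inv x * x) * (inv x * x) = inv x * x := idem_inv_mul h x
  have hene : x * inv x ≠ 0 := mul_inv_ne_zero h hx
  have hfne : inv x * x ≠ 0 := inv_mul_ne_zero h hx
  obtain ⟨V1, V2, hV1, hV2, he1, he2, hVmul⟩ :=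
    exists_sq_nbhd hm (isOpen_compl_singleton (x := (0:S))) (by simpa using hee.symm ▸ hene)
  obtain ⟨W1, W2, hW1, hW2, hf1, hf2, hWmul⟩ :=
    exists_sq_nbhd hm (isOpen_compl_singleton (x := (0:S))) (by simpa using hff.symm ▸ hfne)
  have key : Hcl inv x =
      (fun s => s * inv s) ⁻¹' (V1 ∩ V2) ∩ (fun s => inv s * s) ⁻¹' (W1 ∩ W2) := by
    ext s
    constructor
    · rintro ⟨h1, h2⟩
      exact ⟨by rw [Set.mem_preimage, h1]; exact ⟨he1, he2⟩,
             by rw [Set.mem_preimage, h2]; exact ⟨hf1, hf2⟩⟩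
    · rintro ⟨h1, h2⟩
      rw [Set.mem_preimage] at h1 h2
      have hgidem : (s * inv s) * (s * inv s) = s * inv s := idem_mul_inv h s
      have hg0 : s * inv s ≠ 0 := by
        intro h0
        have := hVmul _ h1.1 _ he2
        rw [h0, zero_mul] at this
        exact this rfl
      have hgid2 : (inv s * s) * (inv s * s) = inv s * s := idem_inv_mul h s
      have hg0' : inv s * s ≠ 0 := by
        intro h0
        have := hWmul _ h2.1 _ hf2
        rw [h0, zero_mul] at this
        exact this rfl
      constructor
      · by_contra hne
        have := idem_orth h hprim hgidem hee hg0 hene hne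
        exact hVmul _ h1.1 _ he2 this
      · by_contra hne
        have := idem_orth h hprim hgid2 hff hg0' hfne hne
        exact hWmul _ h2.1 _ hf2 this
  rw [key]
  exact ((hV1.inter hV2).preimage (continuous_id.mul hinvc)).inter
    (((hW1.inter hW2).preimage (hinvc.mul continuous_id)))

theorem exists_symm_cube (h : IsInverseSemigroup S inv)
    (hm : Continuous fun p : S × S => p.1 * p.2) (hinvc : Continuous inv)
    {U : Set S} (hU : IsOpen U) (h0 : (0:S) ∈ U) :
    ∃ W : Set S, IsOpen W ∧ 0 ∈ W ∧ (∀ s ∈ W, inv s ∈ W) ∧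
      (∀ a ∈ W, ∀ b ∈ W, ∀ c ∈ W, a * b * c ∈ U) ∧ W ⊆ U := by
  obtain ⟨A, B, hA, hB, h0A, h0B, hAB⟩ := exists_sq_nbhd hm hU (a := 0) (b := 0) (by rw [zero_mul]; exact h0)
  obtain ⟨A2, B2, hA2, hB2, h0A2, h0B2, hAB2⟩ := exists_sq_nbhd hm hA (a := 0) (b := 0) (by rw [zero_mul]; exact h0A)
  set T := A2 ∩ B2 ∩ B ∩ U with hT
  have hTo : IsOpen T := ((hA2.inter hB2).inter hB).inter hU
  have h0T : (0:S) ∈ T := ⟨⟨⟨h0A2, h0B2⟩, h0B⟩, h0⟩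
  refine ⟨T ∩ inv ⁻¹' T, hTo.inter (hTo.preimage hinvc), ⟨h0T, by
    rw [Set.mem_preimage, inv_zero h]; exact h0T⟩, ?_, ?_, ?_⟩
  · rintro s ⟨hs1, hs2⟩
    rw [Set.mem_preimage] at hs2
    exact ⟨hs2, by rw [Set.mem_preimage, inv_inv h]; exact hs1⟩
  · rintro a ⟨ha, -⟩ b ⟨hb, -⟩ c ⟨hc, -⟩
    exact hAB _ (hAB2 _ ha.1.1.1 _ hb.1.1.2) _ hc.1.2
  · rintro s ⟨hs, -⟩
    exact hs.2

theorem claimK (h : IsInverseSemigroup S inv)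
    (hm : Continuous fun p : S × S => p.1 * p.2) (hinvc : Continuous inv)
    (hprim : IsPrimitiveInverse S) (hpc : IsPseudocompact S)
    {U : Set S} (hU : IsOpen U) (h0 : (0:S) ∈ U) :
    ∃ W : Set S, IsOpen W ∧ 0 ∈ W ∧ ∀ s ∈ W, s ≠ 0 → Hcl inv s ⊆ U := by
  by_contra hcon
  push_neg at hcon
  have hcon' : ∀ W : Set S, IsOpen W → 0 ∈ W →
      ∃ s, s ∈ W ∧ s ≠ 0 ∧ ∃ z, z ∈ Hcl inv s ∧ z ∉ U := by
    intro W hWo hW0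
    obtain ⟨s, hsW, hsne, hsub⟩ := hcon W hWo hW0
    obtain ⟨z, hz1, hz2⟩ := Set.not_subset.1 hsub
    exact ⟨s, hsW, hsne, z, hz1, hz2⟩
  choose! sfun hs1 hs2 zfun hz1 hz2 using hcon'
  obtain ⟨W1, hW1o, hW10, hW1sym, hW1cube, hW1sub⟩ := exists_symm_cube h hm hinvc hU h0
  set step : Set S → Set S := fun W => W \ Hcl inv (sfun W) with hstep
  set Wseq : ℕ → Set S := fun n => step^[n] W1 with hWseq
  have hWrec : ∀ n, Wseq (n + 1) = step (Wseq n) := fun n =>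
    Function.iterate_succ_apply' _ _ _
  have hWinv : ∀ n, IsOpen (Wseq n) ∧ (0:S) ∈ Wseq n := by
    intro n
    induction n with
    | zero => exact ⟨hW1o, hW10⟩
    | succ k ih =>
      rw [hWrec]
      constructor
      · exact ih.1.sdiff (isClosed_Hcl hm hinvc _)
      · exact ⟨ih.2, zero_not_mem h (hs2 _ ih.1 ih.2)⟩
  have hWmono : ∀ n, Wseq (n+1) ⊆ Wseq n := by
    intro n
    rw [hWrec]
    exact Set.diff_subset
  have hWanti : ∀ {m n}, m ≤ n → Wseq n ⊆ Wseq m := by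
    intro m n hmn
    exact antitone_nat_of_succ_le hWmono hmn
  have hWsub1 : ∀ n, Wseq n ⊆ W1 := fun n => hWanti (Nat.zero_le n)
  set sn : ℕ → S := fun n => sfun (Wseq n) with hsn
  set yn : ℕ → S := fun n => zfun (Wseq n) with hyn
  have hsnW : ∀ n, sn n ∈ Wseq n := fun n => hs1 _ (hWinv n).1 (hWinv n).2
  have hsnne : ∀ n, sn n ≠ 0 := fun n => hs2 _ (hWinv n).1 (hWinv n).2
  have hynH : ∀ n, yn n ∈ Hcl inv (sn n) := fun n => hz1 _ (hWinv n).1 (hWinv n).2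
  have hynU : ∀ n, yn n ∉ U := fun n => hz2 _ (hWinv n).1 (hWinv n).2
  have hHne : ∀ {m n}, m < n → Hcl inv (sn n) ≠ Hcl inv (sn m) := by
    intro m n hmn heq
    have h1 : sn n ∈ Wseq (m+1) := hWanti hmn (hsnW n)
    rw [hWrec] at h1
    exact h1.2 (heq ▸ self_mem (sn n))
  have hHdisj : ∀ {m n}, m ≠ n → Hcl inv (sn m) ∩ Hcl inv (sn n) = ∅ := by
    intro m n hmn
    by_contra hne
    have hint : (Hcl inv (sn m) ∩ Hcl inv (sn n)).Nonempty :=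
      Set.nonempty_iff_ne_empty.2 hne
    have heq := Hcl_eq_of_inter hint
    rcases lt_or_gt_of_ne hmn with hlt | hlt
    · exact hHne hlt heq.symm
    · exact hHne hlt heq
  haveI : ContinuousMul S := ⟨hm⟩
  set Q : ℕ → Set S := fun n =>
    Hcl inv (sn n) ∩ (fun z => sn n * inv (yn n) * z) ⁻¹' (Hcl inv (sn n) ∩ Wseq n) with hQ
  have hQopen : ∀ n, IsOpen (Q n) := by
    intro n
    refine (isOpen_Hcl h hm hinvc hprim (hsnne n)).inter ?_
    exact (((isOpen_Hcl h hm hinvc hprim (hsnne n)).inter (hWinv n).1)).preimage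
      (continuous_const.mul continuous_id)
  have hyQ : ∀ n, yn n ∈ Q n := by
    intro n
    refine ⟨hynH n, ?_⟩
    rw [Set.mem_preimage, mul_inv_mul_self h (self_mem (sn n)) (hynH n)]
    exact ⟨self_mem (sn n), hsnW n⟩
  have hQW1 : ∀ n, ∀ q ∈ Q n, q ∉ W1 := by
    intro n q hq hqW1
    obtain ⟨hqH, hqpre⟩ := hq
    rw [Set.mem_preimage] at hqpre
    have ht : sn n * inv (yn n) * q ∈ Wseq n := hqpre.2
    have hrec : q * inv (sn n * inv (yn n) * q) * sn n = yn n :=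
      shift_recover h (self_mem (sn n)) (hynH n) hqH
    have : yn n ∈ U := by
      rw [← hrec]
      exact hW1cube _ hqW1 _ (hW1sym _ (hWsub1 n ht)) _ (hWsub1 n (hsnW n))
    exact hynU n this
  -- apply pseudocompactness
  have hQinj : Function.Injective Q := by
    intro m n hQeq
    by_contra hmn
    have h1 : yn m ∈ Hcl inv (sn n) := (hQeq ▸ hyQ m).1
    have h2 : yn m ∈ Hcl inv (sn m) := hynH m
    have : yn m ∈ Hcl inv (sn m) ∩ Hcl inv (sn n) := ⟨h2, h1⟩
    rw [hHdisj hmn] at this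
    exact this
  have hlf : LocallyFinite (fun O : ↥(Set.range Q) => (O : Set S)) := by
    intro z
    by_cases hz : z = 0
    · subst hz
      refine ⟨W1, hW1o.mem_nhds hW10, ?_⟩
      refine Set.Finite.subset (Set.finite_empty) ?_
      rintro ⟨O, n, rfl⟩ ⟨q, hq1, hq2⟩
      exact hQW1 n q hq1 hq2
    · refine ⟨Hcl inv z, (isOpen_Hcl h hm hinvc hprim hz).mem_nhds (self_mem z), ?_⟩
      apply Set.Subsingleton.finite
      rintro ⟨O₁, m, rfl⟩ h₁ ⟨O₂, n, rfl⟩ h₂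
      obtain ⟨q₁, hq₁Q, hq₁z⟩ := h₁
      obtain ⟨q₂, hq₂Q, hq₂z⟩ := h₂
      have hmn : m = n := by
        by_contra hmn
        have h1 : Hcl inv (sn m) = Hcl inv z := Hcl_eq_of_inter ⟨q₁, hq₁Q.1, hq₁z⟩
        have h2 : Hcl inv (sn n) = Hcl inv z := Hcl_eq_of_inter ⟨q₂, hq₂Q.1, hq₂z⟩
        have : Hcl inv (sn m) ∩ Hcl inv (sn n) = ∅ := hHdisj hmn
        rw [h1, h2, Set.inter_self] at this
        exact (zero_not_mem h hz) (this ▸ self_mem z) |>.elim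
      subst hmn
      rfl
  have hfin : (Set.range Q).Finite := by
    apply hpc
    · rintro O ⟨n, rfl⟩
      exact ⟨hQopen n, ⟨yn n, hyQ n⟩⟩
    · exact hlf
  exact (Set.infinite_range_of_injective hQinj) hfin

theorem clopen_base (h : IsInverseSemigroup S inv)
    (hm : Continuous fun p : S × S => p.1 * p.2) (hinvc : Continuous inv)
    (hprim : IsPrimitiveInverse S) (hpc : IsPseudocompact S)
    {U : Set S} (hU : IsOpen U) (h0 : (0:S) ∈ U) :
    ∃ C : Set S, IsClopen C ∧ 0 ∈ C ∧ C ⊆ U := by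
  obtain ⟨W, hWo, hW0, hWcl⟩ := claimK h hm hinvc hprim hpc hU h0
  set C : Set S := {0} ∪ {s : S | s ≠ 0 ∧ Hcl inv s ⊆ U} with hC
  have h0C : (0:S) ∈ C := Set.mem_union_left _ rfl
  have hCU : C ⊆ U := by
    rintro s (rfl | ⟨hs0, hsub⟩)
    · exact h0
    · exact hsub (self_mem s)
  refine ⟨C, ⟨?_, ?_⟩, h0C, hCU⟩
  · -- closed : complement is open
    rw [← isOpen_compl_iff]
    rw [isOpen_iff_mem_nhds]
    intro z hzc
    simp only [hC, Set.mem_compl_iff, Set.mem_union, Set.mem_singleton_iff,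
      Set.mem_setOf_eq, not_or, not_and] at hzc
    obtain ⟨hz0, hz2⟩ := hzc
    have hznsub := hz2 hz0
    refine Filter.mem_of_superset
      ((isOpen_Hcl h hm hinvc hprim hz0).mem_nhds (self_mem z)) ?_
    intro w hw
    simp only [hC, Set.mem_compl_iff, Set.mem_union, Set.mem_singleton_iff,
      Set.mem_setOf_eq, not_or, not_and]
    constructor
    · exact mem_ne_zero h hz0 hw
    · intro hw0
      rw [Hcl_eq_of_mem hw]
      exact hznsub
  · rw [isOpen_iff_mem_nhds]
    intro z hz
    rcases hz with rfl | ⟨hz0, hsub⟩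
    · refine Filter.mem_of_superset (hWo.mem_nhds hW0) ?_
      intro w hwW
      by_cases hw0 : w = 0
      · subst hw0; exact h0C
      · exact Set.mem_union_right _ ⟨hw0, hWcl w hwW hw0⟩
    · refine Filter.mem_of_superset
        ((isOpen_Hcl h hm hinvc hprim hz0).mem_nhds (self_mem z)) ?_
      intro w hw
      refine Set.mem_union_right _ ⟨mem_ne_zero h hz0 hw, ?_⟩
      rw [Hcl_eq_of_mem hw]
      exact hsub

theorem extend_clopen {X Y : Type*} [TopologicalSpace X] [TopologicalSpace Y]
    {A : Set X} (hA : IsClopen A) (f : ↥A → Y) (hf : Continuous f) (c : Y) :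
    Continuous fun z => if h : z ∈ A then f ⟨z, h⟩ else c := by
  rw [continuous_def]
  intro O hO
  have himg : IsOpen (Subtype.val '' (f ⁻¹' O) : Set X) :=
    hA.2.isOpenMap_subtype_val _ (hO.preimage hf)
  by_cases hc : c ∈ O
  · have heq : (fun z => if h : z ∈ A then f ⟨z, h⟩ else c) ⁻¹' O
        = Subtype.val '' (f ⁻¹' O) ∪ Aᶜ := by
      ext z
      by_cases hz : z ∈ A
      · rw [Set.mem_preimage, dif_pos hz]
        constructor
        · intro hfz
          exact Or.inl ⟨⟨z, hz⟩, hfz, rfl⟩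
        · rintro (⟨w, hw, hwz⟩ | hzc)
          · cases w
            cases hwz
            exact hw
          · exact absurd hz hzc
      · rw [Set.mem_preimage, dif_neg hz]
        simp only [Set.mem_union, Set.mem_compl_iff]
        exact iff_of_true hc (Or.inr hz)
    rw [heq]
    exact himg.union hA.1.isOpen_compl
  · have heq : (fun z => if h : z ∈ A then f ⟨z, h⟩ else c) ⁻¹' O
        = Subtype.val '' (f ⁻¹' O) := by
      ext z
      by_cases hz : z ∈ A
      · rw [Set.mem_preimage, dif_pos hz]
        constructor
        · intro hfz
          exact ⟨⟨z, hz⟩, hfz, rfl⟩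
        · rintro ⟨w, hw, hwz⟩
          cases w
          cases hwz
          exact hw
      · rw [Set.mem_preimage, dif_neg hz]
        constructor
        · intro habs
          exact absurd habs hc
        · rintro ⟨w, hw, hwz⟩
          exact absurd (hwz ▸ w.2) hz
    rw [heq]
    exact himg

/-- The group `H`-class of a non-zero idempotent is a completely regular space. -/
theorem cr_group (h : IsInverseSemigroup S inv)
    (hm : Continuous fun p : S × S => p.1 * p.2) (hinvc : Continuous inv)
    {e : S} (he : e * e = e) :
    CompletelyRegularSpace ↥(Hcl inv e) := by
  haveI : ContinuousMul S := ⟨hm⟩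
  letI : Mul ↥(Hcl inv e) := ⟨fun a b => ⟨a.1 * b.1, (mem_Hcl_idem h he _).2
    (mul_mem_G h he ((mem_Hcl_idem h he _).1 a.2) ((mem_Hcl_idem h he _).1 b.2))⟩⟩
  letI : One ↥(Hcl inv e) := ⟨⟨e, self_mem e⟩⟩
  letI : Inv ↥(Hcl inv e) := ⟨fun a => ⟨inv a.1, by
    have ha := (mem_Hcl_idem h he _).1 a.2
    exact (mem_Hcl_idem h he _).2 ⟨by rw [inv_inv h]; exact ha.2,
      by rw [inv_inv h]; exact ha.1⟩⟩⟩
  have hmul_val : ∀ a b : ↥(Hcl inv e), ((a * b : ↥(Hcl inv e)) : S) = (a : S) * (b : S) :=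
    fun a b => rfl
  letI : Group ↥(Hcl inv e) := Group.ofLeftAxioms
    (fun a b c => Subtype.ext (mul_assoc (a:S) b c))
    (fun a => by
      refine Subtype.ext ?_
      have key : ∀ u : S, u * inv u = e → e * u = u := fun u hu => by
        rw [← hu, mul_assoc]; exact l1 h (self_mem u)
      exact key (a : S) ((mem_Hcl_idem h he _).1 a.2).1)
    (fun a => by
      refine Subtype.ext ?_
      have ha := (mem_Hcl_idem h he _).1 a.2
      exact ha.2)
  haveI : ContinuousMul ↥(Hcl inv e) := ⟨by
    apply Continuous.subtype_mk
    exact (continuous_subtype_val.comp continuous_fst).mul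
      (continuous_subtype_val.comp continuous_snd)⟩
  haveI : ContinuousInv ↥(Hcl inv e) := ⟨by
    apply Continuous.subtype_mk
    exact hinvc.comp continuous_subtype_val⟩
  haveI : IsTopologicalGroup ↥(Hcl inv e) := ⟨⟩
  exact myTopologicalGroup.completelyRegularSpace _

theorem completelyRegular (h : IsInverseSemigroup S inv)
    (hm : Continuous fun p : S × S => p.1 * p.2) (hinvc : Continuous inv)
    (hprim : IsPrimitiveInverse S) (hpc : IsPseudocompact S) :
    CompletelyRegularSpace S := by
  constructor
  intro x K hK hx
  by_cases hx0 : x = 0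
  · subst hx0
    obtain ⟨C, hCclopen, h0C, hCsub⟩ :=
      clopen_base h hm hinvc hprim hpc hK.isOpen_compl hx
    refine ⟨fun z => if h : z ∈ C then 0 else 1,
      extend_clopen hCclopen (fun _ => (0 : unitInterval)) continuous_const 1, ?_, ?_⟩
    · show (if h : (0:S) ∈ C then (0 : unitInterval) else 1) = 0
      rw [dif_pos h0C]
    · intro z hz
      have : z ∉ C := fun hzC => hCsub hzC hz
      show (if h : z ∈ C then (0 : unitInterval) else 1) = 1
      rw [dif_neg this]
  · have hf0 : (inv x * x) * (inv x * x) = inv x * x := idem_inv_mul h x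
    have hcr := cr_group h hm hinvc hf0
    haveI : ContinuousMul S := ⟨hm⟩
    set pt : ↥(Hcl inv (inv x * x)) := ⟨inv x * x, self_mem _⟩ with hpt
    set K' : Set ↥(Hcl inv (inv x * x)) := (fun w : ↥(Hcl inv (inv x * x)) => x * (w : S)) ⁻¹' K
      with hK'
    have hK'cl : IsClosed K' := hK.preimage (continuous_const.mul continuous_subtype_val)
    have hptK' : pt ∉ K' := by
      intro hmem
      rw [hK', Set.mem_preimage] at hmem
      have : x * (inv x * x) = x := by rw [← mul_assoc]; exact h.mul_inv_mul x
      rw [hpt] at hmem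
      simp only at hmem
      rw [this] at hmem
      exact hx hmem
    obtain ⟨g, hgc, hg0, hgK⟩ := hcr.completely_regular pt K' hK'cl hptK'
    have hclopen : IsClopen (Hcl inv x) :=
      ⟨isClosed_Hcl hm hinvc x, isOpen_Hcl h hm hinvc hprim hx0⟩
    set Φ : ↥(Hcl inv x) → ↥(Hcl inv (inv x * x)) :=
      fun z => ⟨inv x * (z : S), trans_mem₁ h z.2⟩ with hΦ
    have hΦc : Continuous Φ :=
      Continuous.subtype_mk (continuous_const.mul continuous_subtype_val) _
    refine ⟨fun z => if hz : z ∈ Hcl inv x then g (Φ ⟨z, hz⟩) else 1,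
      extend_clopen hclopen (fun z => g (Φ z)) (hgc.comp hΦc) 1, ?_, ?_⟩
    · have hxmem : x ∈ Hcl inv x := self_mem x
      show (if hz : x ∈ Hcl inv x then g (Φ ⟨x, hz⟩) else 1) = 0
      rw [dif_pos hxmem]
      have : Φ ⟨x, hxmem⟩ = pt := Subtype.ext rfl
      rw [this, hg0]
    · intro z hz
      by_cases hzH : z ∈ Hcl inv x
      · show (if hz' : z ∈ Hcl inv x then g (Φ ⟨z, hz'⟩) else 1) = 1
        rw [dif_pos hzH]
        have hmem : Φ ⟨z, hzH⟩ ∈ K' := by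
          rw [hK', Set.mem_preimage]
          show x * (inv x * z) ∈ K
          rw [l1 h hzH]
          exact hz
        exact hgK hmem
      · show (if hz' : z ∈ Hcl inv x then g (Φ ⟨z, hz'⟩) else 1) = 1
        rw [dif_neg hzH]

end Htop

namespace MaxSub

open ISG ISG0 HclFacts HclZ

variable {S : Type*} [SemigroupWithZero S] {inv : S → S}

theorem Gid_left (h : IsInverseSemigroup S inv) {e u : S} (hu : u * inv u = e) : e * u = u := by
  rw [← hu, mul_assoc]
  exact l1 h (self_mem u)

theorem Gid_right (h : IsInverseSemigroup S inv) {e u : S} (hu : inv u * u = e) : u * e = u := by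
  rw [← hu, ← mul_assoc, h.mul_inv_mul]

theorem subgroup_Hcl (h : IsInverseSemigroup S inv) {e : S} (he : e * e = e) :
    IsSubgroupSet S (Hcl inv e) := by
  refine ⟨⟨e, self_mem e⟩, ?_, e, self_mem e, ?_, ?_⟩
  · intro a ha b hb
    exact (mem_Hcl_idem h he _).2
      (mul_mem_G h he ((mem_Hcl_idem h he _).1 ha) ((mem_Hcl_idem h he _).1 hb))
  · intro a ha
    have ha' := (mem_Hcl_idem h he _).1 ha
    exact ⟨Gid_left h ha'.1, Gid_right h ha'.2⟩
  · intro a ha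
    have ha' := (mem_Hcl_idem h he _).1 ha
    exact ⟨inv a, (mem_Hcl_idem h he _).2 ⟨by rw [inv_inv h]; exact ha'.2,
      by rw [inv_inv h]; exact ha'.1⟩, ha'.1, ha'.2⟩

theorem sub_Hcl_of_identity (h : IsInverseSemigroup S inv) {K : Set S}
    {g : S} (hgK : g ∈ K) (hgid : ∀ a ∈ K, g * a = a ∧ a * g = a)
    (hginv : ∀ a ∈ K, ∃ b ∈ K, a * b = g ∧ b * a = g) :
    K ⊆ Hcl inv g := by
  intro a haK
  obtain ⟨b, hbK, hab, hba⟩ := hginv a haK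
  have hinvab : b = inv a := h.inv_unique a b
    (by rw [hab]; exact (hgid a haK).1) (by rw [hba]; exact (hgid b hbK).1)
  have hgg : g * g = g := (hgid g hgK).1
  rw [mem_Hcl_idem h hgg, ← hinvab]
  exact ⟨hab, hba⟩

theorem maximal_Hcl (h : IsInverseSemigroup S inv) (hprim : IsPrimitiveInverse S)
    {e : S} (he : e * e = e) (hene : e ≠ 0) : IsMaximalSubgroup S (Hcl inv e) := by
  refine ⟨subgroup_Hcl h he, ?_⟩
  intro K hK hsub
  obtain ⟨hKne, hKmul, g, hgK, hgid, hginv⟩ := hK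
  have heK : e ∈ K := hsub (self_mem e)
  have hge : g * e = e := (hgid e heK).1
  have heg : e * g = e := (hgid e heK).2
  have hgg : g * g = g := (hgid g hgK).1
  have hg0 : g ≠ 0 := by
    intro h0
    apply hene
    rw [← hge, h0, zero_mul]
  have heq : e = g := hprim g e hgg hg0 he hene heg hge
  have hsub2 : K ⊆ Hcl inv g := sub_Hcl_of_identity h hgK hgid hginv
  rw [← heq] at hsub2
  exact subset_antisymm hsub2 hsub

theorem maximal_classify (h : IsInverseSemigroup S inv) {K : Set S}
    (hK : IsMaximalSubgroup S K) :
    K = {0} ∨ ∃ e : S, e * e = e ∧ e ≠ 0 ∧ K = Hcl inv e := by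
  obtain ⟨⟨hKne, hKmul, g, hgK, hgid, hginv⟩, hmax⟩ := hK
  by_cases hg : g = 0
  · left
    ext a
    simp only [Set.mem_singleton_iff]
    constructor
    · intro haK
      calc a = a * g := ((hgid a haK).2).symm
        _ = 0 := by rw [hg, mul_zero]
    · intro h0
      rw [h0, ← hg]
      exact hgK
  · right
    have hgg : g * g = g := (hgid g hgK).1
    refine ⟨g, hgg, hg, ?_⟩
    exact (hmax (Hcl inv g) (subgroup_Hcl h hgg)
      (sub_Hcl_of_identity h hgK hgid hginv)).symm

end MaxSub

namespace NormTop

open ISG ISG0 HclFacts HclZ Htop MaxSub Topology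

theorem normal_of_subsingleton {X : Type*} [TopologicalSpace X] [Subsingleton X] :
    NormalSpace X := by
  constructor
  intro s t hs ht hd
  rcases Set.eq_empty_or_nonempty s with rfl | ⟨a, ha⟩
  · exact ⟨∅, Set.univ, isOpen_empty, isOpen_univ, Set.Subset.rfl, Set.subset_univ t, by simp⟩
  · refine ⟨Set.univ, ∅, isOpen_univ, isOpen_empty, Set.subset_univ s, ?_, by simp⟩
    intro b hb
    exact absurd hb (Set.disjoint_left.1 hd (by rwa [Subsingleton.elim a b] at ha))

variable {S : Type*} [SemigroupWithZero S] [TopologicalSpace S] [T2Space S] {inv : S → S}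

theorem normal_forward (h : IsInverseSemigroup S inv)
    (hm : Continuous fun p : S × S => p.1 * p.2) (hinvc : Continuous inv)
    (hN : NormalSpace S) {H : Set S} (hmax : IsMaximalSubgroup S H) : NormalSpace ↥H := by
  haveI := hN
  rcases maximal_classify h hmax with rfl | ⟨e, he, hene, rfl⟩
  · haveI : Subsingleton ↥({(0:S)} : Set S) :=
      ⟨fun a b => Subtype.ext ((Set.mem_singleton_iff.1 a.2).trans
        (Set.mem_singleton_iff.1 b.2).symm)⟩
    exact normal_of_subsingleton
  · exact (isClosed_Hcl hm hinvc e).isClosedEmbedding_subtypeVal.normalSpace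

theorem normal_Hcl_trans (h : IsInverseSemigroup S inv)
    (hm : Continuous fun p : S × S => p.1 * p.2) (hinvc : Continuous inv)
    {x : S} (hN : NormalSpace ↥(Hcl inv (inv x * x))) : NormalSpace ↥(Hcl inv x) := by
  haveI : ContinuousMul S := ⟨hm⟩
  haveI := hN
  let Φ : ↥(Hcl inv x) ≃ₜ ↥(Hcl inv (inv x * x)) :=
    { toFun := fun z => ⟨inv x * (z : S), trans_mem₁ h z.2⟩
      invFun := fun w => ⟨x * (w : S), trans_mem₂ h w.2⟩
      left_inv := fun z => Subtype.ext (l1 h z.2)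
      right_inv := fun w => Subtype.ext (trans_inv₂ h w.2)
      continuous_toFun := Continuous.subtype_mk (continuous_const.mul continuous_subtype_val) _
      continuous_invFun := Continuous.subtype_mk (continuous_const.mul continuous_subtype_val) _ }
  exact Φ.isClosedEmbedding.normalSpace

theorem sep_in_clopen {A : Set S} (hA : IsClopen A) (hN : NormalSpace ↥A)
    {s t : Set S} (hs : IsClosed s) (ht : IsClosed t) (hd : Disjoint s t) :
    ∃ U V : Set S, IsOpen U ∧ IsOpen V ∧ U ⊆ A ∧ V ⊆ A ∧
      s ∩ A ⊆ U ∧ t ∩ A ⊆ V ∧ Disjoint U V := by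
  have hs' : IsClosed (Subtype.val ⁻¹' s : Set ↥A) := hs.preimage continuous_subtype_val
  have ht' : IsClosed (Subtype.val ⁻¹' t : Set ↥A) := ht.preimage continuous_subtype_val
  have hd' : Disjoint (Subtype.val ⁻¹' s : Set ↥A) (Subtype.val ⁻¹' t) :=
    Set.disjoint_left.2 fun w hws hwt => Set.disjoint_left.1 hd hws hwt
  obtain ⟨U, V, hU, hV, hsU, htV, hUV⟩ := hN.normal _ _ hs' ht' hd'
  refine ⟨Subtype.val '' U, Subtype.val '' V,
    hA.2.isOpenMap_subtype_val _ hU, hA.2.isOpenMap_subtype_val _ hV, ?_, ?_, ?_, ?_, ?_⟩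
  · rintro z ⟨w, -, rfl⟩
    exact w.2
  · rintro z ⟨w, -, rfl⟩
    exact w.2
  · rintro z ⟨hzs, hzA⟩
    exact ⟨⟨z, hzA⟩, hsU hzs, rfl⟩
  · rintro z ⟨hzt, hzA⟩
    exact ⟨⟨z, hzA⟩, htV hzt, rfl⟩
  · rw [Set.disjoint_left]
    rintro z ⟨w1, hw1, rfl⟩ ⟨w2, hw2, hw⟩
    have : w2 = w1 := Subtype.ext hw
    rw [this] at hw2
    exact Set.disjoint_left.1 hUV hw1 hw2

theorem sep_aux (h : IsInverseSemigroup S inv)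
    (hm : Continuous fun p : S × S => p.1 * p.2) (hinvc : Continuous inv)
    (hprim : IsPrimitiveInverse S) (hpc : IsPseudocompact S)
    (hmaxN : ∀ H : Set S, IsMaximalSubgroup S H → NormalSpace ↥H)
    {s t : Set S} (hs : IsClosed s) (ht : IsClosed t) (hd : Disjoint s t)
    (h0t : (0:S) ∉ t) : SeparatedNhds s t := by
  obtain ⟨C, hC, h0C, hCsub⟩ := clopen_base h hm hinvc hprim hpc ht.isOpen_compl h0t
  have hP : ∀ A : Set S, ∃ UV : Set S × Set S,
      (∃ z : S, z ≠ 0 ∧ Hcl inv z = A) →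
      IsOpen UV.1 ∧ IsOpen UV.2 ∧ UV.1 ⊆ A ∧ UV.2 ⊆ A ∧
        s ∩ A ⊆ UV.1 ∧ t ∩ A ⊆ UV.2 ∧ Disjoint UV.1 UV.2 := by
    intro A
    by_cases hA : ∃ z : S, z ≠ 0 ∧ Hcl inv z = A
    · obtain ⟨z, hz0, rfl⟩ := hA
      have hNz : NormalSpace ↥(Hcl inv z) :=
        normal_Hcl_trans h hm hinvc
          (hmaxN _ (maximal_Hcl h hprim (idem_inv_mul h z) (inv_mul_ne_zero h hz0)))
      obtain ⟨U, V, h1, h2, h3, h4, h5, h6, h7⟩ := sep_in_clopen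
        ⟨isClosed_Hcl hm hinvc z, isOpen_Hcl h hm hinvc hprim hz0⟩ hNz hs ht hd
      exact ⟨(U, V), fun _ => ⟨h1, h2, h3, h4, h5, h6, h7⟩⟩
    · exact ⟨(∅, ∅), fun hA' => absurd hA' hA⟩
  choose g hg using hP
  refine ⟨C ∪ ⋃ z ∈ {z : S | z ≠ 0}, (g (Hcl inv z)).1,
    ⋃ z ∈ {z : S | z ≠ 0}, ((g (Hcl inv z)).2 \ C), ?_, ?_, ?_, ?_, ?_⟩
  · refine hC.2.union (isOpen_biUnion fun z hz => ?_)
    exact (hg (Hcl inv z) ⟨z, hz, rfl⟩).1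
  · refine isOpen_biUnion fun z hz => ?_
    exact ((hg (Hcl inv z) ⟨z, hz, rfl⟩).2.1).sdiff hC.1
  · intro z hzs
    by_cases hz0 : z = 0
    · subst hz0
      exact Set.mem_union_left _ h0C
    · refine Set.mem_union_right _ ?_
      refine Set.mem_biUnion hz0 ?_
      exact (hg (Hcl inv z) ⟨z, hz0, rfl⟩).2.2.2.2.1 ⟨hzs, self_mem z⟩
  · intro z hzt
    have hz0 : z ≠ 0 := fun h0 => h0t (h0 ▸ hzt)
    refine Set.mem_biUnion hz0 ?_
    refine ⟨(hg (Hcl inv z) ⟨z, hz0, rfl⟩).2.2.2.2.2.1 ⟨hzt, self_mem z⟩, ?_⟩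
    intro hzC
    exact hCsub hzC hzt
  · rw [Set.disjoint_left]
    rintro w hwU hwV
    obtain ⟨z₂, hz₂, hw2⟩ := Set.mem_iUnion₂.1 hwV
    rcases hwU with hwC | hwU
    · exact hw2.2 hwC
    · obtain ⟨z₁, hz₁, hw1⟩ := Set.mem_iUnion₂.1 hwU
      have hcls : Hcl inv z₁ = Hcl inv z₂ := by
        apply Hcl_eq_of_inter
        exact ⟨w, (hg (Hcl inv z₁) ⟨z₁, hz₁, rfl⟩).2.2.1 hw1,
          (hg (Hcl inv z₂) ⟨z₂, hz₂, rfl⟩).2.2.2.1 hw2.1⟩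
      rw [hcls] at hw1
      exact Set.disjoint_left.1 (hg (Hcl inv z₂) ⟨z₂, hz₂, rfl⟩).2.2.2.2.2.2 hw1 hw2.1

theorem normal_backward (h : IsInverseSemigroup S inv)
    (hm : Continuous fun p : S × S => p.1 * p.2) (hinvc : Continuous inv)
    (hprim : IsPrimitiveInverse S) (hpc : IsPseudocompact S)
    (hmaxN : ∀ H : Set S, IsMaximalSubgroup S H → NormalSpace ↥H) : NormalSpace S := by
  constructor
  intro s t hs ht hd
  by_cases h0t : (0:S) ∈ t
  · have h0s : (0:S) ∉ s := fun h0s => Set.disjoint_left.1 hd h0s h0t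
    exact (sep_aux h hm hinvc hprim hpc hmaxN ht hs hd.symm h0s).symm
  · exact sep_aux h hm hinvc hprim hpc hmaxN hs ht hd h0t

end NormTop


/-- Every primitive Hausdorff pseudocompact topological
inverse semigroup `S` is a Tychonoff space; moreover, `S` is normal iff every
maximal subgroup of `S` is a normal subspace of `S`. -/
theorem tychonoff_and_normal_iff_maximalSubgroups_normal
    {S : Type*} [SemigroupWithZero S] [TopologicalSpace S] [T2Space S]
    (continuous_mul : Continuous fun p : S × S => p.1 * p.2)
    (inv : S → S) (hinv : IsInverseSemigroup S inv) (hinvc : Continuous inv)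
    (hnt : Nontrivial S) (hprim : IsPrimitiveInverse S)
    (hpc : IsPseudocompact S) :
    T35Space S ∧
      (NormalSpace S ↔ ∀ H : Set S, IsMaximalSubgroup S H → NormalSpace ↥H) := by
  have hm : Continuous fun p : S × S => p.1 * p.2 := continuous_mul
  constructor
  · haveI : CompletelyRegularSpace S := Htop.completelyRegular hinv hm hinvc hprim hpc
    constructor
  · constructor
    · intro hN H hmax
      exact NormTop.normal_forward hinv hm hinvc hN hmax
    · intro hall
      exact NormTop.normal_backward hinv hm hinvc hprim hpc hall
end

section
/- Let S be a primitive Hausdorff pseudocompact topological inverse semigroup such that every maximal subgroup of S is a normal subspace of S. Then S is countably compact. -/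
open Topology

/-- A topological space is *countably compact* if every countable open cover
has a finite subcover. -/
def IsCountablyCompactSpace (X : Type*) [TopologicalSpace X] : Prop :=
  ∀ 𝒰 : Set (Set X), 𝒰.Countable → (∀ U ∈ 𝒰, IsOpen U) → ⋃₀ 𝒰 = Set.univ →
    ∃ 𝒱 ⊆ 𝒰, 𝒱.Finite ∧ ⋃₀ 𝒱 = Set.univ

namespace ISGAux

variable {S : Type*} [SemigroupWithZero S] {inv : S → S}

theorem inv_inv' (hinv : IsInverseSemigroup S inv) (x : S) : inv (inv x) = x :=
  (hinv.inv_unique (inv x) x (hinv.inv_mul_inv x) (hinv.mul_inv_mul x)).symm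

theorem inv_zero' (hinv : IsInverseSemigroup S inv) : inv (0 : S) = 0 :=
  (hinv.inv_unique 0 0 (by simp) (by simp)).symm

theorem inv_idem (hinv : IsInverseSemigroup S inv) {e : S} (he : e * e = e) : inv e = e :=
  (hinv.inv_unique e e (by rw [he, he]) (by rw [he, he])).symm

theorem mul_idem (hinv : IsInverseSemigroup S inv) {e f : S} (he : e * e = e) (hf : f * f = f) :
    (e * f) * (e * f) = e * f := by
  set a := e * f with ha
  have he' : ∀ X : S, e * (e * X) = e * X := fun X => by rw [← mul_assoc, he]
  have hf' : ∀ X : S, f * (f * X) = f * X := fun X => by rw [← mul_assoc, hf]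
  have k1 : a * (f * inv a * e) * a = a := by
    have h := hinv.mul_inv_mul a
    simp only [ha] at h ⊢
    simp only [mul_assoc] at h ⊢
    rw [hf', he']
    exact h
  have k2aux : inv a * a * inv a * e = inv a * e := by rw [hinv.inv_mul_inv]
  have k2aux' : inv a * (e * (f * (inv a * e))) = inv a * e := by
    simpa only [ha, mul_assoc] using k2aux
  have k2 : (f * inv a * e) * a * (f * inv a * e) = f * inv a * e := by
    simp only [ha, mul_assoc]
    rw [he', hf', k2aux']
  have hq : f * inv a * e = inv a := hinv.inv_unique a _ k1 k2
  have h3 : inv a * inv a = inv a := by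
    rw [← hq]
    simp only [mul_assoc]
    rw [k2aux']
  have h4 : a = inv a := (inv_inv' hinv a).symm.trans (inv_idem hinv h3)
  rw [h4]; exact h3

theorem idem_comm (hinv : IsInverseSemigroup S inv) {e f : S} (he : e * e = e) (hf : f * f = f) :
    e * f = f * e := by
  have he' : ∀ X : S, e * (e * X) = e * X := fun X => by rw [← mul_assoc, he]
  have hf' : ∀ X : S, f * (f * X) = f * X := fun X => by rw [← mul_assoc, hf]
  have ha : (e * f) * (e * f) = e * f := mul_idem hinv he hf
  have hb : (f * e) * (f * e) = f * e := mul_idem hinv hf he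
  have h1 : (e * f) * (f * e) * (e * f) = e * f := by
    simp only [mul_assoc] at ha ⊢
    rw [hf', he']
    exact ha
  have h2 : (f * e) * (e * f) * (f * e) = f * e := by
    simp only [mul_assoc] at hb ⊢
    rw [he', hf']
    exact hb
  have := hinv.inv_unique (e * f) (f * e) h1 h2
  rw [this, inv_idem hinv ha]

theorem inv_mul' (hinv : IsInverseSemigroup S inv) (x y : S) :
    inv (x * y) = inv y * inv x := by
  have hp : (y * inv y) * (y * inv y) = y * inv y := by
    rw [← mul_assoc, hinv.mul_inv_mul]
  have hq : (inv x * x) * (inv x * x) = inv x * x := by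
    rw [← mul_assoc, hinv.inv_mul_inv]
  have comm := idem_comm hinv hp hq
  have hx1 : x * (inv x * x) = x := by rw [← mul_assoc, hinv.mul_inv_mul]
  have hy1 : (y * inv y) * y = y := hinv.mul_inv_mul y
  have hx2 : (inv x * x) * inv x = inv x := hinv.inv_mul_inv x
  have hy2 : inv y * (y * inv y) = inv y := by rw [← mul_assoc, hinv.inv_mul_inv]
  have h1 : (x * y) * (inv y * inv x) * (x * y) = x * y := by
    calc (x * y) * (inv y * inv x) * (x * y)
        = x * (((y * inv y) * (inv x * x)) * y) := by simp only [mul_assoc]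
      _ = x * (((inv x * x) * (y * inv y)) * y) := by rw [comm]
      _ = (x * (inv x * x)) * ((y * inv y) * y) := by simp only [mul_assoc]
      _ = x * y := by rw [hx1, hy1]
  have h2 : (inv y * inv x) * (x * y) * (inv y * inv x) = inv y * inv x := by
    calc (inv y * inv x) * (x * y) * (inv y * inv x)
        = inv y * (((inv x * x) * (y * inv y)) * inv x) := by simp only [mul_assoc]
      _ = inv y * (((y * inv y) * (inv x * x)) * inv x) := by rw [comm]
      _ = (inv y * (y * inv y)) * ((inv x * x) * inv x) := by simp only [mul_assoc]
      _ = inv y * inv x := by rw [hy2, hx2]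
  exact (hinv.inv_unique (x * y) (inv y * inv x) h1 h2).symm

theorem psi_idem (hinv : IsInverseSemigroup S inv) (x : S) :
    (x * inv x) * (x * inv x) = x * inv x := by rw [← mul_assoc, hinv.mul_inv_mul]

theorem psi'_idem (hinv : IsInverseSemigroup S inv) (x : S) :
    (inv x * x) * (inv x * x) = inv x * x := by rw [← mul_assoc, hinv.inv_mul_inv]

theorem eq_zero_of_psi (hinv : IsInverseSemigroup S inv) {x : S} (h : x * inv x = 0) : x = 0 := by
  conv_lhs => rw [← hinv.mul_inv_mul x]
  rw [h, zero_mul]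

theorem eq_zero_of_psi' (hinv : IsInverseSemigroup S inv) {x : S} (h : inv x * x = 0) : x = 0 := by
  conv_lhs => rw [← hinv.mul_inv_mul x]
  rw [mul_assoc, h, mul_zero]

/-- primitivity: two non-zero idempotents with non-zero product are equal. -/
theorem prim_eq (hinv : IsInverseSemigroup S inv)
    (hprim : ∀ e f : S, IsIdempotentElem e → e ≠ 0 → IsIdempotentElem f → f ≠ 0 →
      f * e = f → e * f = f → f = e)
    {e f : S} (he : e * e = e) (he0 : e ≠ 0) (hf : f * f = f) (hf0 : f ≠ 0)
    (hef : e * f ≠ 0) : e = f := by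
  have comm := idem_comm hinv he hf
  have hg : (e * f) * (e * f) = e * f := mul_idem hinv he hf
  have hge : (e * f) * e = e * f := by rw [mul_assoc, ← comm, ← mul_assoc, he]
  have heg : e * (e * f) = e * f := by rw [← mul_assoc, he]
  have h1 : e * f = e := hprim e (e * f) he he0 hg hef hge heg
  have hgf : (e * f) * f = e * f := by rw [mul_assoc, hf]
  have hfg : f * (e * f) = e * f := by rw [← mul_assoc, ← comm, mul_assoc, hf]
  have h2 : e * f = f := hprim f (e * f) hf hf0 hg hef hgf hfg
  rw [← h1, h2]

end ISGAux

section Top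

open Topology Filter ISGAux

set_option linter.unusedSectionVars false

variable {S : Type*} [SemigroupWithZero S] [TopologicalSpace S] [T2Space S]

/-- From an infinite pairwise disjoint locally finite family of nonempty open sets,
contradiction with pseudocompactness. -/
theorem key_family
    (hpc : ∀ 𝒰 : Set (Set S), (∀ U ∈ 𝒰, IsOpen U ∧ U.Nonempty) →
      LocallyFinite (fun U : 𝒰 => (U : Set S)) → 𝒰.Finite)
    (F : ℕ → Set S) (hop : ∀ n, IsOpen (F n)) (hne : ∀ n, (F n).Nonempty)
    (hdisj : ∀ m n, m ≠ n → F m ∩ F n = ∅)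
    (hlf : ∀ p : S, ∃ t ∈ 𝓝 p, {n | (F n ∩ t).Nonempty}.Finite) : False := by
  have hFinj : Function.Injective F := by
    intro m n h
    by_contra hmn
    obtain ⟨y, hy⟩ := hne m
    have hmem : y ∈ F m ∩ F n := ⟨hy, h ▸ hy⟩
    rw [hdisj m n hmn] at hmem
    exact hmem
  have h1 : ∀ U ∈ Set.range F, IsOpen U ∧ U.Nonempty := by
    rintro U ⟨n, rfl⟩; exact ⟨hop n, hne n⟩
  have h2 : LocallyFinite (fun U : Set.range F => (U : Set S)) := by
    intro p
    obtain ⟨t, ht, hfin⟩ := hlf p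
    refine ⟨t, ht, ?_⟩
    have hsub : {U : Set.range F | ((U : Set S) ∩ t).Nonempty} ⊆
        (fun n => (⟨F n, Set.mem_range_self n⟩ : Set.range F)) '' {n | (F n ∩ t).Nonempty} := by
      rintro ⟨U, n, rfl⟩ hU
      exact ⟨n, hU, rfl⟩
    exact (hfin.image _).subset hsub
  exact (Set.infinite_range_of_injective hFinj) (hpc _ h1 h2)

/-- a cluster point of a sequence of pairwise orthogonal elements must be 0,
provided it is idempotent. -/
theorem dl (cm : Continuous fun p : S × S => p.1 * p.2)
    (E : ℕ → S) (horth : ∀ m n, m ≠ n → E m * E n = 0) (u : S) (hu : u * u = u)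
    (hcl : ∀ t ∈ 𝓝 u, {n | E n ∈ t}.Infinite) : u = 0 := by
  have h0 : ∀ t ∈ 𝓝 u, (0 : S) ∈ t := by
    intro t ht
    have hc : ContinuousAt (fun p : S × S => p.1 * p.2) (u, u) := cm.continuousAt
    have hpre : (fun p : S × S => p.1 * p.2) ⁻¹' t ∈ 𝓝 (u, u) := by
      apply hc
      show t ∈ 𝓝 (u * u)
      rw [hu]; exact ht
    rw [mem_nhds_prod_iff] at hpre
    obtain ⟨A, hA, B, hB, hAB⟩ := hpre
    obtain ⟨n, hn⟩ := (hcl (A ∩ B) (Filter.inter_mem hA hB)).nonempty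
    obtain ⟨m, hm⟩ := ((hcl (A ∩ B) (Filter.inter_mem hA hB)).diff
      (Set.finite_singleton n)).nonempty
    have hmn : m ≠ n := by
      intro h; exact hm.2 (by simp [h])
    have hmem : (E m, E n) ∈ A ×ˢ B := ⟨hm.1.1, hn.2⟩
    have h2 : E m * E n ∈ t := hAB hmem
    rwa [horth m n hmn] at h2
  have hcl0 : u ∈ closure ({0} : Set S) := by
    rw [mem_closure_iff]
    intro o ho hxo
    exact ⟨0, h0 o (ho.mem_nhds hxo), rfl⟩
  simpa using hcl0

theorem subseq_of_infinite {M : Set ℕ} (hM : M.Infinite) :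
    ∃ φ : ℕ → ℕ, Function.Injective φ ∧ ∀ k, φ k ∈ M := by
  refine ⟨fun k => ((hM.natEmbedding _) k : ℕ), ?_, fun k => ((hM.natEmbedding _) k).2⟩
  intro a b h
  exact (hM.natEmbedding _).injective (Subtype.ext h)

theorem extract_inj {α : Type*} (P : ℕ → α) (hfib : ∀ a, {n | P n = a}.Finite) :
    ∃ φ : ℕ → ℕ, Function.Injective φ ∧ Function.Injective (P ∘ φ) := by
  have hr : (Set.range P).Infinite := by
    intro hfin
    have : (Set.univ : Set ℕ).Finite := by
      refine ((hfin.biUnion (fun a _ => hfib a)).subset ?_)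
      intro n _
      exact Set.mem_biUnion (Set.mem_range_self n) rfl
    exact Set.infinite_univ this
  set emb := hr.natEmbedding _
  have hmem : ∀ k, ((emb k : α) ∈ Set.range P) := fun k => (emb k).2
  refine ⟨fun k => (hmem k).choose, ?_, ?_⟩
  · intro a b h
    dsimp only at h
    have h' := congrArg P h
    rw [(hmem a).choose_spec, (hmem b).choose_spec] at h'
    exact emb.injective (Subtype.ext h')
  · intro a b h
    dsimp only [Function.comp] at h
    rw [(hmem a).choose_spec, (hmem b).choose_spec] at h
    exact emb.injective (Subtype.ext h)

theorem nocluster_comp {x : ℕ → S} (hx : ∀ p : S, ∃ t ∈ 𝓝 p, {n | x n ∈ t}.Finite)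
    {φ : ℕ → ℕ} (hφ : Function.Injective φ) :
    ∀ p : S, ∃ t ∈ 𝓝 p, {n | (x ∘ φ) n ∈ t}.Finite := by
  intro p
  obtain ⟨t, ht, hfin⟩ := hx p
  refine ⟨t, ht, ?_⟩
  have : {n | (x ∘ φ) n ∈ t} = φ ⁻¹' {m | x m ∈ t} := rfl
  rw [this]
  exact hfin.preimage hφ.injOn

variable (hprimv : ∀ e f : S, IsIdempotentElem e → e ≠ 0 → IsIdempotentElem f → f ≠ 0 →
      f * e = f → e * f = f → f = e)
variable (hpcv : ∀ 𝒰 : Set (Set S), (∀ U ∈ 𝒰, IsOpen U ∧ U.Nonempty) →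
      LocallyFinite (fun U : 𝒰 => (U : Set S)) → 𝒰.Finite)
variable (cm : Continuous fun p : S × S => p.1 * p.2)
variable {inv : S → S} (hinv : IsInverseSemigroup S inv) (hinvc : Continuous inv)

include hprimv hpcv cm hinv hinvc

theorem main2
    (x : ℕ → S)
    (hinjE : Function.Injective fun n => x n * inv (x n))
    (hx0 : ∀ n, x n ≠ 0)
    (O N W : Set S) (hO : IsOpen O) (h0O : (0 : S) ∈ O) (hN : IsOpen N)
    (hprodW : ∀ a ∈ O, ∀ b ∈ N, a * b ∈ W)
    (hxW : ∀ n, x n ∉ W) (hfN : ∀ n, inv (x n) * x n ∈ N) : False := by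
  set E : ℕ → S := fun n => x n * inv (x n) with hE
  have hEidem : ∀ n, E n * E n = E n := fun n => psi_idem hinv (x n)
  have hE0 : ∀ n, E n ≠ 0 := fun n h => hx0 n (eq_zero_of_psi hinv h)
  have horth : ∀ m n, m ≠ n → E m * E n = 0 := by
    intro m n hmn
    by_contra hne0
    exact hmn (hinjE (prim_eq hinv hprimv (hEidem m) (hE0 m) (hEidem n) (hE0 n) hne0))
  have hψc : Continuous fun y : S => y * inv y := cm.comp (continuous_id.prodMk hinvc)
  set F : ℕ → Set S := fun n => {y : S | E n * (y * inv y) ≠ 0 ∧ inv y * x n ∈ N} with hF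
  have hop : ∀ n, IsOpen (F n) := by
    intro n
    have c1 : Continuous fun y : S => E n * (y * inv y) :=
      cm.comp (continuous_const.prodMk hψc)
    have c2 : Continuous fun y : S => inv y * x n :=
      cm.comp (hinvc.prodMk continuous_const)
    have heq : F n = ((fun y : S => E n * (y * inv y)) ⁻¹' {(0 : S)}ᶜ) ∩
        ((fun y : S => inv y * x n) ⁻¹' N) := by
      ext y; simp [hF]
    rw [heq]
    exact (isOpen_compl_singleton.preimage c1).inter (hN.preimage c2)
  have hne : ∀ n, x n ∈ F n := by
    intro n
    refine ⟨?_, hfN n⟩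
    show E n * (x n * inv (x n)) ≠ 0
    show E n * E n ≠ 0
    rw [hEidem n]; exact hE0 n
  have hmem : ∀ n y, y ∈ F n → y * inv y = E n := by
    intro n y hy
    have h1 : E n * (y * inv y) ≠ 0 := hy.1
    have hy0 : y * inv y ≠ 0 := fun h => h1 (by rw [h, mul_zero])
    exact (prim_eq hinv hprimv (hEidem n) (hE0 n) (psi_idem hinv y) hy0 h1).symm
  have hdisj : ∀ m n, m ≠ n → F m ∩ F n = ∅ := by
    intro m n hmn
    ext y
    simp only [Set.mem_inter_iff, Set.mem_empty_iff_false, iff_false]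
    rintro ⟨hym, hyn⟩
    exact hmn (hinjE ((hmem m y hym).symm.trans (hmem n y hyn)))
  have hFO : ∀ n, F n ∩ O = ∅ := by
    intro n
    ext y
    simp only [Set.mem_inter_iff, Set.mem_empty_iff_false, iff_false]
    rintro ⟨hyF, hyO⟩
    have h1 : (y * inv y) * x n = x n := by
      rw [hmem n y hyF]
      show (x n * inv (x n)) * x n = x n
      exact hinv.mul_inv_mul (x n)
    have h2 : x n = y * (inv y * x n) := by rw [← mul_assoc, h1]
    exact hxW n (h2 ▸ hprodW y hyO _ hyF.2)
  have hlf : ∀ p : S, ∃ t ∈ 𝓝 p, {n | (F n ∩ t).Nonempty}.Finite := by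
    intro p
    by_cases hp : p = 0
    · refine ⟨O, hO.mem_nhds (by rw [hp]; exact h0O), ?_⟩
      convert Set.finite_empty
      ext n
      simp [hFO n]
    · by_contra hno
      push_neg at hno
      have hclu : ∀ t ∈ 𝓝 (p * inv p), {n | E n ∈ t}.Infinite := by
        intro t ht
        have hpre : (fun y : S => y * inv y) ⁻¹' t ∈ 𝓝 p := hψc.continuousAt ht
        have h2 : {n | (F n ∩ ((fun y : S => y * inv y) ⁻¹' t)).Nonempty}.Infinite :=
          hno _ hpre
        refine h2.mono ?_
        rintro n ⟨y, hyF, hyt⟩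
        show E n ∈ t
        rw [← hmem n y hyF]
        exact hyt
      have hu := dl cm E horth (p * inv p) (psi_idem hinv p) hclu
      exact hp (eq_zero_of_psi hinv hu)
  exact key_family hpcv F hop (fun n => ⟨_, hne n⟩) hdisj hlf

theorem main2'
    (x : ℕ → S)
    (hinjF : Function.Injective fun n => inv (x n) * x n)
    (hx0 : ∀ n, x n ≠ 0)
    (O N W : Set S) (hO : IsOpen O) (h0O : (0 : S) ∈ O) (hN : IsOpen N)
    (hprodW : ∀ a ∈ N, ∀ b ∈ O, a * b ∈ W)
    (hxW : ∀ n, x n ∉ W) (heN : ∀ n, x n * inv (x n) ∈ N) : False := by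
  set E : ℕ → S := fun n => inv (x n) * x n with hE
  have hEidem : ∀ n, E n * E n = E n := fun n => psi'_idem hinv (x n)
  have hE0 : ∀ n, E n ≠ 0 := fun n h => hx0 n (eq_zero_of_psi' hinv h)
  have horth : ∀ m n, m ≠ n → E m * E n = 0 := by
    intro m n hmn
    by_contra hne0
    exact hmn (hinjF (prim_eq hinv hprimv (hEidem m) (hE0 m) (hEidem n) (hE0 n) hne0))
  have hψc : Continuous fun y : S => inv y * y := cm.comp (hinvc.prodMk continuous_id)
  set F : ℕ → Set S := fun n => {y : S | (inv y * y) * E n ≠ 0 ∧ x n * inv y ∈ N} with hF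
  have hop : ∀ n, IsOpen (F n) := by
    intro n
    have c1 : Continuous fun y : S => (inv y * y) * E n :=
      cm.comp (hψc.prodMk continuous_const)
    have c2 : Continuous fun y : S => x n * inv y :=
      cm.comp (continuous_const.prodMk hinvc)
    have heq : F n = ((fun y : S => (inv y * y) * E n) ⁻¹' {(0 : S)}ᶜ) ∩
        ((fun y : S => x n * inv y) ⁻¹' N) := by
      ext y; simp [hF]
    rw [heq]
    exact (isOpen_compl_singleton.preimage c1).inter (hN.preimage c2)
  have hne : ∀ n, x n ∈ F n := by
    intro n
    refine ⟨?_, heN n⟩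
    show (inv (x n) * x n) * E n ≠ 0
    show E n * E n ≠ 0
    rw [hEidem n]; exact hE0 n
  have hmem : ∀ n y, y ∈ F n → inv y * y = E n := by
    intro n y hy
    have h1 : (inv y * y) * E n ≠ 0 := hy.1
    have hy0 : inv y * y ≠ 0 := fun h => h1 (by rw [h, zero_mul])
    exact prim_eq hinv hprimv (psi'_idem hinv y) hy0 (hEidem n) (hE0 n) h1
  have hdisj : ∀ m n, m ≠ n → F m ∩ F n = ∅ := by
    intro m n hmn
    ext y
    simp only [Set.mem_inter_iff, Set.mem_empty_iff_false, iff_false]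
    rintro ⟨hym, hyn⟩
    exact hmn (hinjF ((hmem m y hym).symm.trans (hmem n y hyn)))
  have hFO : ∀ n, F n ∩ O = ∅ := by
    intro n
    ext y
    simp only [Set.mem_inter_iff, Set.mem_empty_iff_false, iff_false]
    rintro ⟨hyF, hyO⟩
    have h1 : x n * (inv y * y) = x n := by
      rw [hmem n y hyF]
      show x n * (inv (x n) * x n) = x n
      rw [← mul_assoc]
      exact hinv.mul_inv_mul (x n)
    have h2 : x n = (x n * inv y) * y := by rw [mul_assoc, h1]
    exact hxW n (h2 ▸ hprodW _ hyF.2 y hyO)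
  have hlf : ∀ p : S, ∃ t ∈ 𝓝 p, {n | (F n ∩ t).Nonempty}.Finite := by
    intro p
    by_cases hp : p = 0
    · refine ⟨O, hO.mem_nhds (by rw [hp]; exact h0O), ?_⟩
      convert Set.finite_empty
      ext n
      simp [hFO n]
    · by_contra hno
      push_neg at hno
      have hclu : ∀ t ∈ 𝓝 (inv p * p), {n | E n ∈ t}.Infinite := by
        intro t ht
        have hpre : (fun y : S => inv y * y) ⁻¹' t ∈ 𝓝 p := hψc.continuousAt ht
        have h2 : {n | (F n ∩ ((fun y : S => inv y * y) ⁻¹' t)).Nonempty}.Infinite :=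
          hno _ hpre
        refine h2.mono ?_
        rintro n ⟨y, hyF, hyt⟩
        show E n ∈ t
        rw [← hmem n y hyF]
        exact hyt
      have hu := dl cm E horth (inv p * p) (psi'_idem hinv p) hclu
      exact hp (eq_zero_of_psi' hinv hu)
  exact key_family hpcv F hop (fun n => ⟨_, hne n⟩) hdisj hlf

theorem avoid
    (E : ℕ → S) (hinjE : Function.Injective E)
    (hEidem : ∀ n, E n * E n = E n) (hE0 : ∀ n, E n ≠ 0)
    (O₀ : Set S) (hO₀ : O₀ ∈ 𝓝 (0 : S)) (hav : ∀ n, E n ∉ O₀) : False := by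
  have horth : ∀ m n, m ≠ n → E m * E n = 0 := by
    intro m n hmn
    by_contra hne0
    exact hmn (hinjE (prim_eq hinv hprimv (hEidem m) (hE0 m) (hEidem n) (hE0 n) hne0))
  have hψc : Continuous fun y : S => inv y * y := cm.comp (hinvc.prodMk continuous_id)
  set F : ℕ → Set S := fun n => {y : S | (inv y * y) * E n ≠ 0} with hF
  have hop : ∀ n, IsOpen (F n) := by
    intro n
    have c1 : Continuous fun y : S => (inv y * y) * E n :=
      cm.comp (hψc.prodMk continuous_const)
    have heq : F n = (fun y : S => (inv y * y) * E n) ⁻¹' {(0 : S)}ᶜ := by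
      ext y; simp [hF]
    rw [heq]
    exact isOpen_compl_singleton.preimage c1
  have hne : ∀ n, E n ∈ F n := by
    intro n
    show (inv (E n) * E n) * E n ≠ 0
    rw [inv_idem hinv (hEidem n), hEidem n, hEidem n]
    exact hE0 n
  have hmem : ∀ n y, y ∈ F n → inv y * y = E n := by
    intro n y hy
    have h1 : (inv y * y) * E n ≠ 0 := hy
    have hy0 : inv y * y ≠ 0 := fun h => h1 (by rw [h, zero_mul])
    exact prim_eq hinv hprimv (psi'_idem hinv y) hy0 (hEidem n) (hE0 n) h1
  have hdisj : ∀ m n, m ≠ n → F m ∩ F n = ∅ := by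
    intro m n hmn
    ext y
    simp only [Set.mem_inter_iff, Set.mem_empty_iff_false, iff_false]
    rintro ⟨hym, hyn⟩
    exact hmn (hinjE ((hmem m y hym).symm.trans (hmem n y hyn)))
  have hlf : ∀ p : S, ∃ t ∈ 𝓝 p, {n | (F n ∩ t).Nonempty}.Finite := by
    intro p
    by_contra hno
    push_neg at hno
    have hclu : ∀ t ∈ 𝓝 (inv p * p), {n | E n ∈ t}.Infinite := by
      intro t ht
      have hpre : (fun y : S => inv y * y) ⁻¹' t ∈ 𝓝 p := hψc.continuousAt ht
      have h2 : {n | (F n ∩ ((fun y : S => inv y * y) ⁻¹' t)).Nonempty}.Infinite :=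
        hno _ hpre
      refine h2.mono ?_
      rintro n ⟨y, hyF, hyt⟩
      show E n ∈ t
      rw [← hmem n y hyF]
      exact hyt
    have hu := dl cm E horth (inv p * p) (psi'_idem hinv p) hclu
    have hO₀' : O₀ ∈ 𝓝 (inv p * p) := by rw [hu]; exact hO₀
    obtain ⟨n, hn⟩ := (hclu O₀ hO₀').nonempty
    exact hav n hn
  exact key_family hpcv F hop (fun n => ⟨_, hne n⟩) hdisj hlf

theorem case1
    (hnorm : ∀ H : Set S, IsMaximalSubgroup S H → NormalSpace ↥H)
    (x : ℕ → S) (hinj : Function.Injective x)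
    (e f : S) (hef : ∀ n, x n * inv (x n) = e ∧ inv (x n) * x n = f)
    (hx : ∀ p : S, ∃ t ∈ 𝓝 p, {n | x n ∈ t}.Finite) : False := by
  classical
  have he0 : e ≠ 0 := by
    intro h
    have h0 : ∀ n, x n = 0 := fun n => eq_zero_of_psi hinv ((hef n).1.trans h)
    exact absurd (hinj ((h0 0).trans (h0 1).symm)) (by norm_num)
  have hf0 : f ≠ 0 := by
    intro h
    have h0 : ∀ n, x n = 0 := fun n => eq_zero_of_psi' hinv ((hef n).2.trans h)
    exact absurd (hinj ((h0 0).trans (h0 1).symm)) (by norm_num)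
  have heid : e * e = e := by rw [← (hef 0).1]; exact psi_idem hinv (x 0)
  have hfid : f * f = f := by rw [← (hef 0).2]; exact psi'_idem hinv (x 0)
  have hinvf : inv f = f := inv_idem hinv hfid
  set G : Set S := {y : S | y * inv y = f ∧ inv y * y = f} with hGdef
  have hfmem : f ∈ G := by
    constructor
    · rw [hinvf]; exact hfid
    · rw [hinvf]; exact hfid
  have hGsub : IsSubgroupSet S G := by
    refine ⟨⟨f, hfmem⟩, ?_, ?_⟩
    · intro a ha b hb
      constructor
      · calc (a * b) * inv (a * b) = (a * b) * (inv b * inv a) := by rw [inv_mul' hinv]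
          _ = a * ((b * inv b) * inv a) := by simp only [mul_assoc]
          _ = a * (f * inv a) := by rw [hb.1]
          _ = a * ((inv a * a) * inv a) := by rw [← ha.2]
          _ = (a * inv a) * (a * inv a) := by simp only [mul_assoc]
          _ = f := by rw [ha.1, hfid]
      · calc inv (a * b) * (a * b) = (inv b * inv a) * (a * b) := by rw [inv_mul' hinv]
          _ = inv b * ((inv a * a) * b) := by simp only [mul_assoc]
          _ = inv b * (f * b) := by rw [ha.2]
          _ = inv b * ((b * inv b) * b) := by rw [← hb.1]
          _ = (inv b * b) * (inv b * b) := by simp only [mul_assoc]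
          _ = f := by rw [hb.2, hfid]
    · refine ⟨f, hfmem, fun a ha => ⟨?_, ?_⟩, fun a ha => ⟨inv a, ?_, ha.1, ha.2⟩⟩
      · rw [← ha.1]; exact hinv.mul_inv_mul a
      · conv_lhs => rw [← ha.2]
        rw [← mul_assoc]; exact hinv.mul_inv_mul a
      · exact ⟨by rw [inv_inv' hinv]; exact ha.2, by rw [inv_inv' hinv]; exact ha.1⟩
  have hGmax : IsMaximalSubgroup S G := by
    refine ⟨hGsub, ?_⟩
    rintro K ⟨hKne, hKmul, u, huK, hid, hinvK⟩ hGK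
    have hfK : f ∈ K := hGK hfmem
    have huu : u * u = u := (hid u huK).1
    have hu0 : u ≠ 0 := by
      intro h
      apply hf0
      have h2 := (hid f hfK).1
      rw [h, zero_mul] at h2
      exact h2.symm
    have hfu : f = u := hprimv u f huu hu0 hfid hf0 (hid f hfK).2 (hid f hfK).1
    apply Set.Subset.antisymm ?_ hGK
    intro a haK
    obtain ⟨b, hbK, hab, hba⟩ := hinvK a haK
    have hbinv : b = inv a := by
      apply hinv.inv_unique
      · rw [hab]; exact (hid a haK).1
      · rw [hba]; exact (hid b hbK).1
    constructor
    · rw [← hbinv, hab, ← hfu]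
    · rw [← hbinv, hba, ← hfu]
  have hnormG : NormalSpace ↥G := hnorm G hGmax
  set H : Set S := {y : S | y * inv y = e ∧ inv y * y = f} with hHdef
  have hxH : ∀ n, x n ∈ H := fun n => ⟨(hef n).1, (hef n).2⟩
  set x₀ := x 0 with hx₀def
  have hx₀ : x₀ * inv x₀ = e ∧ inv x₀ * x₀ = f := hef 0
  have htoG : ∀ y : S, y ∈ H → inv x₀ * y ∈ G := by
    intro y hy
    constructor
    · calc (inv x₀ * y) * inv (inv x₀ * y)
          = (inv x₀ * y) * (inv y * inv (inv x₀)) := by rw [inv_mul' hinv]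
        _ = (inv x₀ * y) * (inv y * x₀) := by rw [inv_inv' hinv]
        _ = inv x₀ * ((y * inv y) * x₀) := by simp only [mul_assoc]
        _ = inv x₀ * ((x₀ * inv x₀) * x₀) := by rw [hy.1, ← hx₀.1]
        _ = inv x₀ * x₀ := by rw [hinv.mul_inv_mul]
        _ = f := hx₀.2
    · calc inv (inv x₀ * y) * (inv x₀ * y)
          = (inv y * inv (inv x₀)) * (inv x₀ * y) := by rw [inv_mul' hinv]
        _ = (inv y * x₀) * (inv x₀ * y) := by rw [inv_inv' hinv]
        _ = inv y * ((x₀ * inv x₀) * y) := by simp only [mul_assoc]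
        _ = inv y * ((y * inv y) * y) := by rw [hx₀.1, ← hy.1]
        _ = inv y * y := by rw [hinv.mul_inv_mul]
        _ = f := hy.2
  have htoH : ∀ z : S, z ∈ G → x₀ * z ∈ H := by
    intro z hz
    constructor
    · calc (x₀ * z) * inv (x₀ * z) = (x₀ * z) * (inv z * inv x₀) := by rw [inv_mul' hinv]
        _ = x₀ * ((z * inv z) * inv x₀) := by simp only [mul_assoc]
        _ = x₀ * ((inv x₀ * x₀) * inv x₀) := by rw [hz.1, ← hx₀.2]
        _ = (x₀ * inv x₀) * (x₀ * inv x₀) := by simp only [mul_assoc]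
        _ = e := by rw [hx₀.1, heid]
    · calc inv (x₀ * z) * (x₀ * z) = (inv z * inv x₀) * (x₀ * z) := by rw [inv_mul' hinv]
        _ = inv z * ((inv x₀ * x₀) * z) := by simp only [mul_assoc]
        _ = inv z * ((z * inv z) * z) := by rw [hx₀.2, ← hz.1]
        _ = inv z * z := by rw [hinv.mul_inv_mul]
        _ = f := hz.2
  have hleft : ∀ y : S, y ∈ H → x₀ * (inv x₀ * y) = y := by
    intro y hy
    rw [← mul_assoc, hx₀.1, ← hy.1, hinv.mul_inv_mul]
  have hright : ∀ z : S, z ∈ G → inv x₀ * (x₀ * z) = z := by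
    intro z hz
    rw [← mul_assoc, hx₀.2, ← hz.1, hinv.mul_inv_mul]
  let φ : ↥H ≃ₜ ↥G :=
    { toFun := fun y => ⟨inv x₀ * (y : S), htoG (y : S) y.2⟩
      invFun := fun z => ⟨x₀ * (z : S), htoH (z : S) z.2⟩
      left_inv := fun y => Subtype.ext (hleft (y : S) y.2)
      right_inv := fun z => Subtype.ext (hright (z : S) z.2)
      continuous_toFun := by
        apply Continuous.subtype_mk
        exact cm.comp (continuous_const.prodMk continuous_subtype_val)
      continuous_invFun := by
        apply Continuous.subtype_mk
        exact cm.comp (continuous_const.prodMk continuous_subtype_val) }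
  haveI : NormalSpace ↥G := hnormG
  haveI hnormH : NormalSpace ↥H := φ.isClosedEmbedding.normalSpace
  have hclosedrange : IsClosed (Set.range x) := by
    rw [← isOpen_compl_iff, isOpen_iff_mem_nhds]
    intro p hp
    obtain ⟨t, ht, hfin⟩ := hx p
    have himg : IsClosed (x '' {n | x n ∈ t}) := (hfin.image x).isClosed
    have hp2 : p ∈ (x '' {n | x n ∈ t})ᶜ := by
      intro hmem
      obtain ⟨m, _, hm⟩ := hmem
      exact hp ⟨m, hm⟩
    have hmem2 : t ∩ (x '' {n | x n ∈ t})ᶜ ∈ 𝓝 p :=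
      Filter.inter_mem ht (himg.isOpen_compl.mem_nhds hp2)
    refine Filter.mem_of_superset hmem2 ?_
    rintro q ⟨hqt, hqim⟩
    rintro ⟨m, rfl⟩
    exact hqim ⟨m, hqt, rfl⟩
  set A : Set ↥H := Subtype.val ⁻¹' Set.range x with hAdef
  have hAclosed : IsClosed A := hclosedrange.preimage continuous_subtype_val
  haveI hAdisc : DiscreteTopology ↥A := by
    rw [discreteTopology_iff_isOpen_singleton]
    intro a
    obtain ⟨k, hk⟩ := (a.2 : ((a : ↥H) : S) ∈ Set.range x)
    obtain ⟨t, ht, hfin⟩ := hx (x k)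
    set B := x '' ({n | x n ∈ t} \ {k}) with hBdef
    have hBfin : B.Finite := (hfin.diff (t := {k})).image x
    have hxkB : x k ∉ B := by
      rintro ⟨m, ⟨hmt, hmk⟩, hmx⟩
      exact hmk (hinj hmx)
    have ht' : t ∩ Bᶜ ∈ 𝓝 (x k) :=
      Filter.inter_mem ht (hBfin.isClosed.isOpen_compl.mem_nhds hxkB)
    have hcont : Continuous fun b : ↥A => ((b : ↥H) : S) :=
      continuous_subtype_val.comp continuous_subtype_val
    have hpre : (fun b : ↥A => ((b : ↥H) : S)) ⁻¹' (t ∩ Bᶜ) ∈ 𝓝 a := by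
      apply hcont.continuousAt
      show t ∩ Bᶜ ∈ 𝓝 ((a : ↥H) : S)
      rw [← hk]
      exact ht'
    have hsub : (fun b : ↥A => ((b : ↥H) : S)) ⁻¹' (t ∩ Bᶜ) ⊆ {a} := by
      intro b hb
      obtain ⟨m, hm⟩ := (b.2 : ((b : ↥H) : S) ∈ Set.range x)
      have hmk : m = k := by
        by_contra hne
        apply hb.2
        exact ⟨m, ⟨show x m ∈ t by rw [hm]; exact hb.1, hne⟩, hm⟩
      have hval : ((b : ↥H) : S) = ((a : ↥H) : S) := by rw [← hm, hmk, hk]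
      have hba : b = a := Subtype.ext (Subtype.ext hval)
      simp [hba]
    rw [isOpen_iff_mem_nhds]
    intro b hb
    rw [Set.mem_singleton_iff] at hb
    subst hb
    exact Filter.mem_of_superset hpre hsub
  have hmemA : ∀ a : ↥A, ((a : ↥H) : S) ∈ Set.range x := fun a => a.2
  set f₀ : C(↥A, ℝ) := ⟨fun a => ((hmemA a).choose : ℝ), continuous_of_discreteTopology⟩
    with hf₀def
  obtain ⟨g, hg⟩ := ContinuousMap.exists_restrict_eq (Y := ℝ) hAclosed f₀
  have hgx : ∀ k : ℕ, g ⟨x k, hxH k⟩ = (k : ℝ) := by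
    intro k
    have haA : (⟨x k, hxH k⟩ : ↥H) ∈ A := ⟨k, rfl⟩
    set a : ↥A := ⟨⟨x k, hxH k⟩, haA⟩ with hadef
    have h1 : g.restrict A a = f₀ a := by rw [hg]
    have h2 : g.restrict A a = g ⟨x k, hxH k⟩ := rfl
    have h3 : f₀ a = (((hmemA a).choose : ℕ) : ℝ) := rfl
    have h4 : x ((hmemA a).choose) = x k := (hmemA a).choose_spec
    have h5 : (hmemA a).choose = k := hinj h4
    rw [← h2, h1, h3, h5]
  have hψc : Continuous fun y : S => y * inv y := cm.comp (continuous_id.prodMk hinvc)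
  have hψ'c : Continuous fun y : S => inv y * y := cm.comp (hinvc.prodMk continuous_id)
  have hHclosed : IsClosed H := by
    have heq : H = (fun y : S => y * inv y) ⁻¹' {e} ∩ (fun y : S => inv y * y) ⁻¹' {f} := by
      ext y
      simp [hHdef]
    rw [heq]
    exact (isClosed_singleton.preimage hψc).inter (isClosed_singleton.preimage hψ'c)
  have hHopen : IsOpen H := by
    have heq : H = ((fun y : S => e * (y * inv y)) ⁻¹' {(0 : S)}ᶜ) ∩
        ((fun y : S => (inv y * y) * f) ⁻¹' {(0 : S)}ᶜ) := by
      ext y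
      simp only [hHdef, Set.mem_setOf_eq, Set.mem_inter_iff, Set.mem_preimage,
        Set.mem_compl_iff, Set.mem_singleton_iff]
      constructor
      · rintro ⟨h1, h2⟩
        constructor
        · rw [h1, heid]; exact he0
        · rw [h2, hfid]; exact hf0
      · rintro ⟨h1, h2⟩
        have hy1 : y * inv y ≠ 0 := fun h => h1 (by rw [h, mul_zero])
        have hy2 : inv y * y ≠ 0 := fun h => h2 (by rw [h, zero_mul])
        exact ⟨(prim_eq hinv hprimv heid he0 (psi_idem hinv y) hy1 h1).symm,
          prim_eq hinv hprimv (psi'_idem hinv y) hy2 hfid hf0 h2⟩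
    rw [heq]
    have c1 : Continuous fun y : S => e * (y * inv y) :=
      cm.comp (continuous_const.prodMk hψc)
    have c2 : Continuous fun y : S => (inv y * y) * f :=
      cm.comp (hψ'c.prodMk continuous_const)
    exact (isOpen_compl_singleton.preimage c1).inter (isOpen_compl_singleton.preimage c2)
  set F : ℕ → Set S :=
    fun k => Subtype.val '' {y : ↥H | g y ∈ Set.Ioo ((k : ℝ) - 1/3) ((k : ℝ) + 1/3)} with hFdef
  have hopF : ∀ k, IsOpen (F k) := fun k =>
    hHopen.isOpenMap_subtype_val _ (isOpen_Ioo.preimage g.continuous)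
  have hneF : ∀ k, x k ∈ F k := by
    intro k
    refine ⟨⟨x k, hxH k⟩, ?_, rfl⟩
    show g ⟨x k, hxH k⟩ ∈ Set.Ioo _ _
    rw [hgx k, Set.mem_Ioo]
    constructor <;> norm_num
  have hvalinj : Function.Injective (Subtype.val : ↥H → S) := Subtype.val_injective
  have hdisjF : ∀ m n, m ≠ n → F m ∩ F n = ∅ := by
    intro m n hmn
    ext q
    simp only [Set.mem_inter_iff, Set.mem_empty_iff_false, iff_false]
    rintro ⟨⟨a, ham, rfl⟩, ⟨b, hbn, hba⟩⟩
    have hab : b = a := hvalinj hba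
    rw [hab] at hbn
    obtain ⟨h1, h2⟩ := ham
    obtain ⟨h3, h4⟩ := hbn
    apply hmn
    have hlt1 : (m : ℝ) < (n : ℝ) + 1 := by linarith
    have hlt2 : (n : ℝ) < (m : ℝ) + 1 := by linarith
    have h5 : m < n + 1 := by exact_mod_cast hlt1
    have h6 : n < m + 1 := by exact_mod_cast hlt2
    omega
  have hlfF : ∀ p : S, ∃ t ∈ 𝓝 p, {k | (F k ∩ t).Nonempty}.Finite := by
    intro p
    by_cases hpH : p ∈ H
    · set gp := g ⟨p, hpH⟩ with hgpdef
      set t := Subtype.val '' {y : ↥H | g y ∈ Set.Ioo (gp - 1) (gp + 1)} with htdef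
      have hto : IsOpen t := hHopen.isOpenMap_subtype_val _ (isOpen_Ioo.preimage g.continuous)
      have hpt : p ∈ t := by
        refine ⟨⟨p, hpH⟩, ?_, rfl⟩
        show g ⟨p, hpH⟩ ∈ Set.Ioo _ _
        rw [Set.mem_Ioo]
        constructor <;> [linarith; linarith]
      refine ⟨t, hto.mem_nhds hpt, ?_⟩
      have hsub : {k | (F k ∩ t).Nonempty} ⊆ Set.Iio ⌈gp + 2⌉₊ := by
        intro k hk
        obtain ⟨q, ⟨a, ha, rfl⟩, ⟨b, hb, hba⟩⟩ := hk
        have hab : b = a := hvalinj hba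
        rw [hab] at hb
        have h1 := ha.1
        have h2 := hb.2
        rw [Set.mem_Iio]
        apply Nat.lt_ceil.mpr
        linarith
      exact (Set.finite_Iio _).subset hsub
    · refine ⟨Hᶜ, hHclosed.isOpen_compl.mem_nhds hpH, ?_⟩
      convert Set.finite_empty
      ext k
      simp only [Set.mem_setOf_eq, Set.mem_empty_iff_false, iff_false]
      rintro ⟨q, ⟨a, _, rfl⟩, hqc⟩
      exact hqc a.2
  exact key_family hpcv F hopF (fun k => ⟨_, hneF k⟩) hdisjF hlfF


theorem caseFconst
    (x : ℕ → S) (hinjE : Function.Injective fun n => x n * inv (x n))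
    (hx0 : ∀ n, x n ≠ 0) (f : S) (hf : ∀ n, inv (x n) * x n = f)
    (hx : ∀ p : S, ∃ t ∈ 𝓝 p, {n | x n ∈ t}.Finite) : False := by
  obtain ⟨t0, ht0, hfin0⟩ := hx 0
  obtain ⟨W, hWsub, hWopen, h0W⟩ := mem_nhds_iff.mp ht0
  have hbad : {n | x n ∈ W}.Finite := hfin0.subset fun n hn => hWsub hn
  obtain ⟨φ, hφ, hφM⟩ := subseq_of_infinite hbad.infinite_compl
  have hpre : (fun p : S × S => p.1 * p.2) ⁻¹' W ∈ 𝓝 ((0 : S), f) := by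
    apply cm.continuousAt
    show W ∈ 𝓝 ((0 : S) * f)
    rw [zero_mul]
    exact hWopen.mem_nhds h0W
  rw [mem_nhds_prod_iff] at hpre
  obtain ⟨O0, hO0, N0, hN0, hON⟩ := hpre
  obtain ⟨O, hOsub, hOopen, h0O⟩ := mem_nhds_iff.mp hO0
  obtain ⟨N, hNsub, hNopen, hfN⟩ := mem_nhds_iff.mp hN0
  refine main2 hprimv hpcv cm hinv hinvc (x ∘ φ) ?_ (fun n => hx0 (φ n)) O N W hOopen h0O
    hNopen ?_ (fun n => hφM n) ?_
  · exact fun a b h => hφ (hinjE h)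
  · intro a ha b hb
    exact hON (Set.mk_mem_prod (hOsub ha) (hNsub hb))
  · intro n
    show inv (x (φ n)) * x (φ n) ∈ N
    rw [hf (φ n)]
    exact hfN

theorem caseEconst
    (x : ℕ → S) (hinjF : Function.Injective fun n => inv (x n) * x n)
    (hx0 : ∀ n, x n ≠ 0) (e : S) (he : ∀ n, x n * inv (x n) = e)
    (hx : ∀ p : S, ∃ t ∈ 𝓝 p, {n | x n ∈ t}.Finite) : False := by
  obtain ⟨t0, ht0, hfin0⟩ := hx 0
  obtain ⟨W, hWsub, hWopen, h0W⟩ := mem_nhds_iff.mp ht0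
  have hbad : {n | x n ∈ W}.Finite := hfin0.subset fun n hn => hWsub hn
  obtain ⟨φ, hφ, hφM⟩ := subseq_of_infinite hbad.infinite_compl
  have hpre : (fun p : S × S => p.1 * p.2) ⁻¹' W ∈ 𝓝 (e, (0 : S)) := by
    apply cm.continuousAt
    show W ∈ 𝓝 (e * (0 : S))
    rw [mul_zero]
    exact hWopen.mem_nhds h0W
  rw [mem_nhds_prod_iff] at hpre
  obtain ⟨N0, hN0, O0, hO0, hON⟩ := hpre
  obtain ⟨N, hNsub, hNopen, heN⟩ := mem_nhds_iff.mp hN0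
  obtain ⟨O, hOsub, hOopen, h0O⟩ := mem_nhds_iff.mp hO0
  refine main2' hprimv hpcv cm hinv hinvc (x ∘ φ) ?_ (fun n => hx0 (φ n)) O N W hOopen h0O
    hNopen ?_ (fun n => hφM n) ?_
  · exact fun a b h => hφ (hinjF h)
  · intro a ha b hb
    exact hON (Set.mk_mem_prod (hNsub ha) (hOsub hb))
  · intro n
    show x (φ n) * inv (x (φ n)) ∈ N
    rw [he (φ n)]
    exact heN

theorem caseBoth
    (x : ℕ → S) (hinjE : Function.Injective fun n => x n * inv (x n))
    (hinjF : Function.Injective fun n => inv (x n) * x n)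
    (hx0 : ∀ n, x n ≠ 0)
    (hx : ∀ p : S, ∃ t ∈ 𝓝 p, {n | x n ∈ t}.Finite) : False := by
  by_cases hT : ∀ t ∈ 𝓝 (0 : S), {n | inv (x n) * x n ∉ t}.Finite
  · obtain ⟨t0, ht0, hfin0⟩ := hx 0
    obtain ⟨W, hWsub, hWopen, h0W⟩ := mem_nhds_iff.mp ht0
    have hbadW : {n | x n ∈ W}.Finite := hfin0.subset fun n hn => hWsub hn
    have hpre : (fun p : S × S => p.1 * p.2) ⁻¹' W ∈ 𝓝 ((0 : S), (0 : S)) := by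
      apply cm.continuousAt
      show W ∈ 𝓝 ((0 : S) * (0 : S))
      rw [mul_zero]
      exact hWopen.mem_nhds h0W
    rw [mem_nhds_prod_iff] at hpre
    obtain ⟨O0, hO0, N0, hN0, hON⟩ := hpre
    obtain ⟨O, hOsub, hOopen, h0O⟩ := mem_nhds_iff.mp (Filter.inter_mem hO0 hN0)
    have hbad : ({n | x n ∈ W} ∪ {n | inv (x n) * x n ∉ O}).Finite :=
      hbadW.union (hT O (hOopen.mem_nhds h0O))
    obtain ⟨φ, hφ, hφM⟩ := subseq_of_infinite hbad.infinite_compl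
    have hgood : ∀ k, x (φ k) ∉ W ∧ inv (x (φ k)) * x (φ k) ∈ O := by
      intro k
      have hmem := hφM k
      rw [Set.mem_compl_iff, Set.mem_union] at hmem
      push_neg at hmem
      exact ⟨hmem.1, not_not.mp hmem.2⟩
    refine main2 hprimv hpcv cm hinv hinvc (x ∘ φ) ?_ (fun n => hx0 (φ n)) O O W hOopen h0O
      hOopen ?_ (fun n => (hgood n).1) (fun n => (hgood n).2)
    · exact fun a b h => hφ (hinjE h)
    · intro a ha b hb
      exact hON (Set.mk_mem_prod (hOsub ha).1 (hOsub hb).2)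
  · push_neg at hT
    obtain ⟨t0, ht0, hinf⟩ := hT
    obtain ⟨φ, hφ, hφM⟩ := subseq_of_infinite hinf
    refine avoid hprimv hpcv cm hinv hinvc (fun k => inv (x (φ k)) * x (φ k)) ?_
      (fun k => psi'_idem hinv _) (fun k h => hx0 (φ k) (eq_zero_of_psi' hinv h))
      t0 ht0 (fun k => hφM k)
    · exact fun a b h => hφ (hinjF h)

theorem no_cluster_false
    (hnorm : ∀ H : Set S, IsMaximalSubgroup S H → NormalSpace ↥H)
    (x : ℕ → S) (hx : ∀ p : S, ∃ t ∈ 𝓝 p, {n | x n ∈ t}.Finite) : False := by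
  classical
  have hfib : ∀ v : S, {n | x n = v}.Finite := by
    intro v
    by_contra hvinf
    obtain ⟨t, ht, hfin⟩ := hx v
    refine hvinf (hfin.subset ?_)
    intro n hn
    show x n ∈ t
    rw [show x n = v from hn]
    exact mem_of_mem_nhds ht
  obtain ⟨φ₁, hφ₁, hxinj1⟩ := extract_inj x hfib
  set x1 : ℕ → S := x ∘ φ₁ with hx1def
  have hx1 : ∀ p : S, ∃ t ∈ 𝓝 p, {n | x1 n ∈ t}.Finite := nocluster_comp hx hφ₁
  have hx1inj : Function.Injective x1 := hxinj1
  have hzfin : {n | x1 n = 0}.Finite := by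
    apply Set.Subsingleton.finite
    intro a ha b hb
    exact hx1inj (ha.trans hb.symm)
  obtain ⟨φ₂, hφ₂, hφ₂M⟩ := subseq_of_infinite hzfin.infinite_compl
  set x2 : ℕ → S := x1 ∘ φ₂ with hx2def
  have hx2 : ∀ p : S, ∃ t ∈ 𝓝 p, {n | x2 n ∈ t}.Finite := nocluster_comp hx1 hφ₂
  have hx2inj : Function.Injective x2 := hx1inj.comp hφ₂
  have hx20 : ∀ n, x2 n ≠ 0 := fun n => hφ₂M n
  set P : ℕ → S × S := fun n => (x2 n * inv (x2 n), inv (x2 n) * x2 n) with hPdef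
  by_cases hc1 : ∃ v : S × S, {n | P n = v}.Infinite
  · obtain ⟨⟨e, f⟩, hvinf⟩ := hc1
    obtain ⟨φ₃, hφ₃, hφ₃M⟩ := subseq_of_infinite hvinf
    refine case1 hprimv hpcv cm hinv hinvc hnorm (x2 ∘ φ₃) (hx2inj.comp hφ₃) e f ?_
      (nocluster_comp hx2 hφ₃)
    intro n
    have hP : P (φ₃ n) = (e, f) := hφ₃M n
    exact ⟨congrArg Prod.fst hP, congrArg Prod.snd hP⟩
  · push_neg at hc1
    obtain ⟨φ₃, hφ₃, hPinj⟩ := extract_inj P (fun v => (hc1 v))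
    set x3 : ℕ → S := x2 ∘ φ₃ with hx3def
    have hx3 : ∀ p : S, ∃ t ∈ 𝓝 p, {n | x3 n ∈ t}.Finite := nocluster_comp hx2 hφ₃
    have hx30 : ∀ n, x3 n ≠ 0 := fun n => hx20 (φ₃ n)
    set E3 : ℕ → S := fun n => x3 n * inv (x3 n) with hE3def
    by_cases hc2 : ∃ v : S, {n | E3 n = v}.Infinite
    · -- ψ constant along a subsequence; pair injective forces ψ' injective
      obtain ⟨e, hvinf⟩ := hc2
      obtain ⟨φ₄, hφ₄, hφ₄M⟩ := subseq_of_infinite hvinf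
      set x4 : ℕ → S := x3 ∘ φ₄ with hx4def
      have he4 : ∀ n, x4 n * inv (x4 n) = e := fun n => hφ₄M n
      have hf4inj : Function.Injective fun n => inv (x4 n) * x4 n := by
        intro a b h
        have h1 : x4 a * inv (x4 a) = x4 b * inv (x4 b) := (he4 a).trans (he4 b).symm
        have h2 : (P ∘ φ₃) (φ₄ a) = (P ∘ φ₃) (φ₄ b) := Prod.ext h1 h
        exact hφ₄ (hPinj h2)
      exact caseEconst hprimv hpcv cm hinv hinvc x4 hf4inj (fun n => hx30 (φ₄ n)) e he4
        (nocluster_comp hx3 hφ₄)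
    · push_neg at hc2
      obtain ⟨φ₄, hφ₄, hE4inj⟩ := extract_inj E3 (fun v => (hc2 v))
      set x4 : ℕ → S := x3 ∘ φ₄ with hx4def
      have hx4 : ∀ p : S, ∃ t ∈ 𝓝 p, {n | x4 n ∈ t}.Finite := nocluster_comp hx3 hφ₄
      have hx40 : ∀ n, x4 n ≠ 0 := fun n => hx30 (φ₄ n)
      have hE4inj' : Function.Injective fun n => x4 n * inv (x4 n) := hE4inj
      set F4 : ℕ → S := fun n => inv (x4 n) * x4 n with hF4def
      by_cases hc3 : ∃ v : S, {n | F4 n = v}.Infinite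
      · obtain ⟨f, hvinf⟩ := hc3
        obtain ⟨φ₅, hφ₅, hφ₅M⟩ := subseq_of_infinite hvinf
        refine caseFconst hprimv hpcv cm hinv hinvc (x4 ∘ φ₅) ?_ (fun n => hx40 (φ₅ n)) f
          (fun n => hφ₅M n) (nocluster_comp hx4 hφ₅)
        exact fun a b h => hφ₅ (hE4inj' h)
      · push_neg at hc3
        obtain ⟨φ₅, hφ₅, hF5inj⟩ := extract_inj F4 (fun v => (hc3 v))
        refine caseBoth hprimv hpcv cm hinv hinvc (x4 ∘ φ₅) ?_ hF5inj (fun n => hx40 (φ₅ n))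
          (nocluster_comp hx4 hφ₅)
        exact fun a b h => hφ₅ (hE4inj' h)

end Top

/-- A primitive Hausdorff pseudocompact topological inverse
semigroup all of whose maximal subgroups are normal subspaces is countably
compact. -/
theorem countablyCompact_of_pseudocompact_primitive_normal_subgroups
    {S : Type*} [SemigroupWithZero S] [TopologicalSpace S] [T2Space S]
    (continuous_mul : Continuous fun p : S × S => p.1 * p.2)
    (inv : S → S) (hinv : IsInverseSemigroup S inv) (hinvc : Continuous inv)
    (hnt : Nontrivial S) (hprim : IsPrimitiveInverse S)
    (hpc : IsPseudocompact S)
    (hnorm : ∀ H : Set S, IsMaximalSubgroup S H → NormalSpace ↥H) :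
    IsCountablyCompactSpace S := by
  classical
  intro 𝒰 hcount hopen hcover
  by_contra hnofin
  push_neg at hnofin
  have h𝒰ne : 𝒰.Nonempty := by
    have h0 : (0 : S) ∈ ⋃₀ 𝒰 := by rw [hcover]; trivial
    obtain ⟨U, hU, _⟩ := h0
    exact ⟨U, hU⟩
  obtain ⟨u, hu⟩ := hcount.exists_eq_range h𝒰ne
  have hxex : ∀ n : ℕ, ∃ y : S, ∀ k ≤ n, y ∉ u k := by
    intro n
    by_contra hall
    push_neg at hall
    refine hnofin (u '' Set.Iic n) ?_ ((Set.finite_Iic n).image u) ?_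
    · rw [hu]
      exact Set.image_subset_range u _
    · apply Set.eq_univ_iff_forall.mpr
      intro q
      obtain ⟨k, hk, hqk⟩ := hall q
      exact ⟨u k, ⟨k, hk, rfl⟩, hqk⟩
  choose y hy using hxex
  have hclaim : ∀ p : S, ∃ t ∈ nhds p, {n | y n ∈ t}.Finite := by
    intro p
    have hp : p ∈ ⋃₀ 𝒰 := by rw [hcover]; trivial
    obtain ⟨U, hU, hpU⟩ := hp
    have hUopen : IsOpen U := hopen U hU
    rw [hu] at hU
    obtain ⟨k, rfl⟩ := hU
    refine ⟨u k, hUopen.mem_nhds hpU, ?_⟩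
    refine (Set.finite_Iio k).subset ?_
    intro n hn
    rw [Set.mem_Iio]
    by_contra hkn
    push_neg at hkn
    exact hy n k hkn hn
  exact no_cluster_false hprim hpc continuous_mul hinv hinvc hnorm y hclaim
end
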